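/- arXiv:1705.05349 — 4 statements merged into one kernel-verified Lean document; each statement's English description precedes it below -/
import Mathlib

section
/- Let F ∈ ℂ[s_1,…,s_n]. If for every w ∈ Z(p) there exist an open neighborhood V of w and functions g_1,…,g_n analytic on V such that F(s) = Σ_{j=1}^n g_j(s) p_j(s) for all s ∈ V, then F belongs to the ideal generated by p_1,…,p_n in ℂ[s_1,…,s_n]. -/
/-- Partial derivative operator in direction `j`. -/
noncomputable def pdOp {n : ℕ} (j : Fin n) (f : (Fin n → ℂ) → ℂ) : (Fin n → ℂ) → ℂ :=
  fun x => fderiv ℂ f x (Pi.single j 1)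

/-- Mixed partial derivative `∂^ℓ f`. -/
noncomputable def mixedPartial {n : ℕ} (ℓ : Fin n → ℕ) (f : (Fin n → ℂ) → ℂ) :
    (Fin n → ℂ) → ℂ :=
  (List.finRange n).foldr (fun j g => (pdOp j)^[ℓ j] g) f

/-- `g` belongs locally to the ideal generated by `p 1, …, p n` in `H(U)`. -/
def MemLocalIdeal {n : ℕ} (U : Set (Fin n → ℂ)) (p : Fin n → MvPolynomial (Fin n) ℂ)
    (g : (Fin n → ℂ) → ℂ) : Prop :=
  ∀ w ∈ U, ∃ V : Set (Fin n → ℂ), IsOpen V ∧ V ⊆ U ∧ w ∈ V ∧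
    ∃ q : Fin n → ((Fin n → ℂ) → ℂ), (∀ j, AnalyticOnNhd ℂ (q j) V) ∧
      ∀ s ∈ V, g s = ∑ j, q j s * MvPolynomial.eval s (p j)



open Filter Topology MvPolynomial Asymptotics

lemma oneVar {N : ℕ} {a : ℕ → ℂ}
    (h : (fun t : ℂ => ∑ d ∈ Finset.range N, a d * t ^ d) =O[𝓝 0] fun t => ‖t‖ ^ N) :
    ∀ d, d < N → a d = 0 := by
  intro d
  induction d using Nat.strong_induction_on with
  | _ d ih =>
    intro hdN
    set g : ℂ → ℂ := fun t => ∑ e ∈ Finset.range (N - d), a (d + e) * t ^ e with hg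
    have hfg : ∀ t : ℂ, (∑ e ∈ Finset.range N, a e * t ^ e) = t ^ d * g t := by
      intro t
      have h1 : ∑ e ∈ Finset.range d, a e * t ^ e = 0 :=
        Finset.sum_eq_zero fun e he => by
          rw [ih e (Finset.mem_range.mp he) (lt_trans (Finset.mem_range.mp he) hdN), zero_mul]
      rw [← Finset.sum_range_add_sum_Ico _ (le_of_lt hdN), h1, zero_add,
        Finset.sum_Ico_eq_sum_range, hg, Finset.mul_sum]
      exact Finset.sum_congr rfl fun e he => by ring
    obtain ⟨C, hC⟩ := isBigO_iff.mp h
    have hbound : ∀ᶠ t : ℂ in 𝓝[≠] 0, ‖g t‖ ≤ C * ‖t‖ ^ (N - d) := by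
      filter_upwards [nhdsWithin_le_nhds hC, self_mem_nhdsWithin] with t ht ht0
      rw [hfg t] at ht
      have h2 : ‖t ^ d * g t‖ = ‖t‖ ^ d * ‖g t‖ := by
        rw [norm_mul, norm_pow]
      have h3 : ‖(‖t‖ ^ N : ℝ)‖ = ‖t‖ ^ d * ‖t‖ ^ (N - d) := by
        rw [Real.norm_of_nonneg (by positivity), ← pow_add]
        congr 1; omega
      rw [h2, h3, ← mul_assoc, mul_comm C (‖t‖ ^ d), mul_assoc] at ht
      have htpos : 0 < ‖t‖ ^ d := by
        apply pow_pos; simpa [norm_pos_iff] using ht0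
      exact le_of_mul_le_mul_left ht htpos
    have hg0 : Tendsto g (𝓝[≠] 0) (𝓝 0) := by
      apply squeeze_zero_norm' hbound
      have : Tendsto (fun t : ℂ => C * ‖t‖ ^ (N - d)) (𝓝 0) (𝓝 (C * ‖(0:ℂ)‖ ^ (N - d))) := by
        exact (tendsto_const_nhds.mul ((continuous_norm.tendsto 0).pow _))
      rw [norm_zero, zero_pow (by omega), mul_zero] at this
      exact this.mono_left nhdsWithin_le_nhds
    have hgc : Tendsto g (𝓝[≠] 0) (𝓝 (a d)) := by
      have hcont : Continuous g := by
        apply continuous_finset_sum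
        exact fun i _ => continuous_const.mul (continuous_pow i)
      have : g 0 = a d := by
        show (∑ e ∈ Finset.range (N - d), a (d + e) * (0:ℂ) ^ e) = a d
        rw [Finset.sum_eq_single_of_mem 0 (Finset.mem_range.mpr (by omega))]
        · simp
        · intro e _ he0; simp [zero_pow he0]
      rw [← this]
      exact (hcont.tendsto 0).mono_left nhdsWithin_le_nhds
    exact tendsto_nhds_unique hgc hg0

lemma prod_mem_pow {R : Type*} [CommRing R] (I : Ideal R) {ι : Type*} (s : Finset ι)
    (f : ι → R) (g : ι → ℕ) (h : ∀ i ∈ s, f i ∈ I ^ g i) :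
    (∏ i ∈ s, f i) ∈ I ^ (∑ i ∈ s, g i) := by
  induction s using Finset.cons_induction with
  | empty => simp [Ideal.one_eq_top]
  | cons a s ha ih =>
    rw [Finset.prod_cons, Finset.sum_cons, pow_add]
    exact Ideal.mul_mem_mul (h a (Finset.mem_cons_self a s))
      (ih fun i hi => h i (Finset.mem_cons_of_mem hi))

lemma monomial_mem_pow {n N : ℕ} (m : Fin n →₀ ℕ) (c : ℂ) (hm : N ≤ m.degree) :
    monomial m c ∈ Ideal.span (Set.range (X : Fin n → MvPolynomial (Fin n) ℂ)) ^ N := by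
  set J := Ideal.span (Set.range (X : Fin n → MvPolynomial (Fin n) ℂ)) with hJ
  have key : (∏ i ∈ m.support, (X i : MvPolynomial (Fin n) ℂ) ^ m i) ∈ J ^ m.degree := by
    apply prod_mem_pow
    intro i _
    exact Ideal.pow_mem_pow (Ideal.subset_span (Set.mem_range_self i)) _
  have : monomial m c = C c * ∏ i ∈ m.support, (X i : MvPolynomial (Fin n) ℂ) ^ m i := by
    rw [monomial_eq]; rfl
  rw [this]
  exact Ideal.pow_le_pow_right hm (Ideal.mul_mem_left _ _ key)

lemma isBigO_of_support {n N : ℕ} (P : MvPolynomial (Fin n) ℂ)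
    (h : ∀ m ∈ P.support, N ≤ m.degree) :
    (fun y : Fin n → ℂ => eval y P) =O[𝓝 0] fun y => ‖y‖ ^ N := by
  have heval : (fun y : Fin n → ℂ => eval y P)
      = fun y => ∑ m ∈ P.support, coeff m P * ∏ i ∈ m.support, y i ^ m i := by
    funext y; exact eval_eq y P
  rw [heval]
  apply Asymptotics.IsBigO.fun_sum
  intro m hm
  rw [Asymptotics.isBigO_iff]
  refine ⟨‖coeff m P‖, ?_⟩
  have h1 : ∀ᶠ y : Fin n → ℂ in 𝓝 0, ‖y‖ ≤ 1 := by
    filter_upwards [Metric.closedBall_mem_nhds (0 : Fin n → ℂ) one_pos] with y hy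
    simpa [dist_zero_right] using hy
  filter_upwards [h1] with y hy
  have h2 : ‖coeff m P * ∏ i ∈ m.support, y i ^ m i‖
      = ‖coeff m P‖ * ∏ i ∈ m.support, ‖y i‖ ^ m i := by
    rw [norm_mul, norm_prod]; simp [norm_pow]
  rw [h2]
  have h3 : (∏ i ∈ m.support, ‖y i‖ ^ m i) ≤ ∏ i ∈ m.support, ‖y‖ ^ m i := by
    apply Finset.prod_le_prod
    · intro i _; positivity
    · intro i _; exact pow_le_pow_left₀ (norm_nonneg _) (norm_le_pi_norm y i) _
  have h4 : (∏ i ∈ m.support, ‖y‖ ^ m i) = ‖y‖ ^ m.degree := by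
    rw [Finset.prod_pow_eq_pow_sum]; rfl
  have h5 : ‖y‖ ^ m.degree ≤ ‖y‖ ^ N := by
    exact pow_le_pow_of_le_one (norm_nonneg _) hy (h m hm)
  have h6 : ‖(‖y‖ ^ N : ℝ)‖ = ‖y‖ ^ N := Real.norm_of_nonneg (by positivity)
  rw [h6]
  calc ‖coeff m P‖ * ∏ i ∈ m.support, ‖y i‖ ^ m i
      ≤ ‖coeff m P‖ * ∏ i ∈ m.support, ‖y‖ ^ m i :=
        mul_le_mul_of_nonneg_left h3 (norm_nonneg _)
    _ = ‖coeff m P‖ * ‖y‖ ^ m.degree := by rw [h4]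
    _ ≤ ‖coeff m P‖ * ‖y‖ ^ N := mul_le_mul_of_nonneg_left h5 (norm_nonneg _)

lemma isHomog_eval_smul {n d : ℕ} {φ : MvPolynomial (Fin n) ℂ} (hφ : φ.IsHomogeneous d)
    (t : ℂ) (v : Fin n → ℂ) : eval (t • v) φ = t ^ d * eval v φ := by
  rw [eval_eq, eval_eq, Finset.mul_sum]
  apply Finset.sum_congr rfl
  intro m hm
  have hdeg : m.degree = d := by
    have := hφ (mem_support_iff.mp hm)
    rwa [Finsupp.degree_eq_weight_one]
  have h1 : (∏ i ∈ m.support, (t • v) i ^ m i)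
      = (∏ i ∈ m.support, t ^ m i) * ∏ i ∈ m.support, v i ^ m i := by
    rw [← Finset.prod_mul_distrib]
    exact Finset.prod_congr rfl fun i _ => by simp [mul_pow]
  have h2 : (∏ i ∈ m.support, t ^ m i) = t ^ d := by
    rw [Finset.prod_pow_eq_pow_sum, ← hdeg]; rfl
  rw [h1, h2]; ring

lemma bridge0 {n : ℕ} (N : ℕ) (H : MvPolynomial (Fin n) ℂ)
    (h : (fun y : Fin n → ℂ => eval y H) =O[𝓝 0] fun y => ‖y‖ ^ N) :
    H ∈ Ideal.span (Set.range (X : Fin n → MvPolynomial (Fin n) ℂ)) ^ N := by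
  set J := Ideal.span (Set.range (X : Fin n → MvPolynomial (Fin n) ℂ)) with hJ
  set L := ∑ d ∈ Finset.range N, homogeneousComponent d H with hL
  set R := H - L with hR
  have hRsupp : ∀ m ∈ R.support, N ≤ m.degree := by
    intro m hm
    by_contra hlt
    push_neg at hlt
    apply mem_support_iff.mp hm
    have hcL : coeff m L = coeff m H := by
      rw [hL, coeff_sum]
      simp only [coeff_homogeneousComponent]
      rw [Finset.sum_ite_eq (Finset.range N) m.degree (fun _ => coeff m H)]
      simp [Finset.mem_range.mpr hlt]
    rw [hR, coeff_sub, hcL, sub_self]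
  have hRmem : R ∈ J ^ N := by
    rw [← support_sum_monomial_coeff R]
    exact Ideal.sum_mem _ fun m hm => monomial_mem_pow m _ (hRsupp m hm)
  have hRO : (fun y : Fin n → ℂ => eval y R) =O[𝓝 0] fun y => ‖y‖ ^ N :=
    isBigO_of_support R hRsupp
  have hLO : (fun y : Fin n → ℂ => eval y L) =O[𝓝 0] fun y => ‖y‖ ^ N := by
    have : (fun y : Fin n → ℂ => eval y L) = fun y => eval y H - eval y R := by
      funext y; rw [hR, map_sub]; ring
    rw [this]
    exact h.sub hRO
  have hcomp : ∀ d, d < N → homogeneousComponent d H = 0 := by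
    have hv : ∀ (v : Fin n → ℂ) (d : ℕ), d < N → eval v (homogeneousComponent d H) = 0 := by
      intro v
      apply oneVar
      have htend : Filter.Tendsto (fun t : ℂ => t • v) (𝓝 0) (𝓝 0) := by
        have : Filter.Tendsto (fun t : ℂ => t • v) (𝓝 0) (𝓝 ((0 : ℂ) • v)) :=
          (continuous_id.smul continuous_const).tendsto 0
        simpa using this
      have h1 := hLO.comp_tendsto htend
      have h2 : (fun t : ℂ => ∑ d ∈ Finset.range N, eval v (homogeneousComponent d H) * t ^ d)
          = fun t : ℂ => eval (t • v) L := by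
        funext t
        rw [hL, map_sum]
        exact Finset.sum_congr rfl fun d _ => by
          rw [isHomog_eval_smul (homogeneousComponent_isHomogeneous d H) t v]; ring
      rw [h2]
      have h3 : ((fun y : Fin n → ℂ => ‖y‖ ^ N) ∘ fun t : ℂ => t • v)
          =O[𝓝 0] fun t : ℂ => ‖t‖ ^ N := by
        have : ((fun y : Fin n → ℂ => ‖y‖ ^ N) ∘ fun t : ℂ => t • v)
            = fun t : ℂ => ‖v‖ ^ N * ‖t‖ ^ N := by
          funext t
          simp only [Function.comp_apply, norm_smul, mul_pow]
          ring
        rw [this]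
        exact (Asymptotics.isBigO_refl (fun t : ℂ => ‖t‖ ^ N) (𝓝 0)).const_mul_left _
      exact h1.trans h3
    intro d hd
    exact (homogeneousComponent_isHomogeneous d H).eq_zero_of_forall_eval_eq_zero
      (fun v => hv v d hd)
  have hL0 : L = 0 := by
    rw [hL]
    exact Finset.sum_eq_zero fun d hd => hcomp d (Finset.mem_range.mp hd)
  have : H = R := by rw [hR, hL0, sub_zero]
  rw [this]
  exact hRmem

lemma eval_shift {n : ℕ} (w y : Fin n → ℂ) (H : MvPolynomial (Fin n) ℂ) :
    eval y (aeval (fun i => X i + C (w i) : Fin n → MvPolynomial (Fin n) ℂ) H)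
      = eval (w + y) H := by
  induction H using MvPolynomial.induction_on with
  | C a => simp [algebraMap_eq]
  | add p q hp hq => simp only [map_add, eval_add]; exact congrArg₂ (· + ·) hp hq
  | mul_X p i hp =>
    simp only [map_mul, aeval_X, hp, eval_mul, eval_add, eval_X, eval_C, Pi.add_apply]
    ring

lemma shift_shift {n : ℕ} (w : Fin n → ℂ) (H : MvPolynomial (Fin n) ℂ) :
    aeval (fun i => X i - C (w i) : Fin n → MvPolynomial (Fin n) ℂ)
      (aeval (fun i => X i + C (w i) : Fin n → MvPolynomial (Fin n) ℂ) H) = H := by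
  induction H using MvPolynomial.induction_on with
  | C a => simp [algebraMap_eq]
  | add p q hp hq => simp only [map_add]; exact congrArg₂ (· + ·) hp hq
  | mul_X p i hp =>
    simp only [map_mul, map_add, aeval_X, hp, algebraMap_eq, aeval_C]
    ring

lemma bridgeW {n : ℕ} (N : ℕ) (w : Fin n → ℂ) (H : MvPolynomial (Fin n) ℂ)
    (h : (fun y : Fin n → ℂ => eval (w + y) H) =O[𝓝 0] fun y => ‖y‖ ^ N) :
    H ∈ Ideal.span (Set.range fun i => (X i : MvPolynomial (Fin n) ℂ) - C (w i)) ^ N := by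
  set H₀ := aeval (fun i => X i + C (w i) : Fin n → MvPolynomial (Fin n) ℂ) H with hH₀
  have h0 : (fun y : Fin n → ℂ => eval y H₀) =O[𝓝 0] fun y => ‖y‖ ^ N := by
    have : (fun y : Fin n → ℂ => eval y H₀) = fun y => eval (w + y) H := by
      funext y; rw [hH₀, eval_shift]
    rw [this]; exact h
  have hmem := bridge0 N H₀ h0
  set ψ : MvPolynomial (Fin n) ℂ →ₐ[ℂ] MvPolynomial (Fin n) ℂ :=
    aeval (fun i => X i - C (w i) : Fin n → MvPolynomial (Fin n) ℂ) with hψ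
  have hH : H = ψ H₀ := (shift_shift w H).symm
  have hmap : ψ H₀ ∈ Ideal.map (ψ : MvPolynomial (Fin n) ℂ →+* MvPolynomial (Fin n) ℂ)
      (Ideal.span (Set.range (X : Fin n → MvPolynomial (Fin n) ℂ)) ^ N) :=
    Ideal.mem_map_of_mem _ hmem
  rw [Ideal.map_pow, Ideal.map_span, ← Set.range_comp] at hmap
  have : (⇑(ψ : MvPolynomial (Fin n) ℂ →+* MvPolynomial (Fin n) ℂ) ∘ X
        : Fin n → MvPolynomial (Fin n) ℂ)
      = fun i => (X i : MvPolynomial (Fin n) ℂ) - C (w i) := by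
    funext i; simp [hψ]
  rw [this] at hmap
  rw [hH]
  exact hmap

lemma eval_polyOf {n k : ℕ} (w : Fin n → ℂ)
    (m : ContinuousMultilinearMap ℂ (fun _ : Fin k => (Fin n → ℂ)) ℂ) (s : Fin n → ℂ) :
    eval s (∑ d : Fin k → Fin n, C (m fun i => Pi.single (d i) 1)
        * ∏ i, (X (d i) - C (w (d i)))) = m (fun _ => s - w) := by
  have hexp : m (fun _ : Fin k => s - w)
      = m (fun _ : Fin k => ∑ t : Fin n, Pi.single t ((s - w) t)) := by
    congr 1
    funext _
    exact (Finset.univ_sum_single (s - w)).symm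
  rw [hexp, m.map_sum]
  rw [map_sum]
  apply Finset.sum_congr rfl
  intro d _
  have h1 : (fun i : Fin k => Pi.single (d i) ((s - w) (d i)))
      = fun i : Fin k => ((s - w) (d i)) • (Pi.single (d i) 1 : Fin n → ℂ) := by
    funext i
    ext t
    by_cases ht : t = d i <;> simp [Pi.single_apply, ht]
  rw [h1, m.map_smul_univ]
  simp only [eval_mul, eval_C, map_prod, eval_sub, eval_X]
  rw [smul_eq_mul, mul_comm]
  simp [Pi.sub_apply]

lemma analytic_step {n : ℕ} (p : Fin n → MvPolynomial (Fin n) ℂ) (N : ℕ)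
    (F : MvPolynomial (Fin n) ℂ) (w : Fin n → ℂ)
    (V : Set (Fin n → ℂ)) (hV : IsOpen V) (hwV : w ∈ V)
    (g : Fin n → ((Fin n → ℂ) → ℂ)) (hg : ∀ j, AnalyticOnNhd ℂ (g j) V)
    (heq : ∀ s ∈ V, eval s F = ∑ j, g j s * eval s (p j)) :
    ∃ Q : Fin n → MvPolynomial (Fin n) ℂ,
      (fun y : Fin n → ℂ => eval (w + y) (F - ∑ j, Q j * p j)) =O[𝓝 0] fun y => ‖y‖ ^ N := by
  have hA : ∀ j, AnalyticAt ℂ (g j) w := fun j => hg j w hwV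
  choose q hq using hA
  refine ⟨fun j => ∑ k ∈ Finset.range N, ∑ d : Fin k → Fin n,
    C (q j k fun i => Pi.single (d i) 1) * ∏ i, (X (d i) - C (w (d i))), ?_⟩
  have hevalQ : ∀ j s, eval s (∑ k ∈ Finset.range N, ∑ d : Fin k → Fin n,
      C (q j k fun i => Pi.single (d i) 1) * ∏ i, (X (d i) - C (w (d i))))
      = (q j).partialSum N (s - w) := by
    intro j s
    rw [map_sum]
    exact Finset.sum_congr rfl fun k _ => eval_polyOf w (q j k) s
  have htend : Filter.Tendsto (fun y : Fin n → ℂ => w + y) (𝓝 0) (𝓝 w) := by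
    have hc : Continuous (fun y : Fin n → ℂ => w + y) :=
      continuous_const.add continuous_id
    have := hc.tendsto (0 : Fin n → ℂ)
    simpa using this
  have hmemV : ∀ᶠ y : Fin n → ℂ in 𝓝 0, w + y ∈ V := htend.eventually (hV.eventually_mem hwV)
  have hEq : (fun y : Fin n → ℂ => eval (w + y) (F - ∑ j, (∑ k ∈ Finset.range N,
        ∑ d : Fin k → Fin n, C (q j k fun i => Pi.single (d i) 1)
          * ∏ i, (X (d i) - C (w (d i)))) * p j))
      =ᶠ[𝓝 0] fun y => ∑ j, (g j (w + y) - (q j).partialSum N y) * eval (w + y) (p j) := by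
    filter_upwards [hmemV] with y hy
    rw [map_sub, map_sum, heq _ hy, ← Finset.sum_sub_distrib]
    apply Finset.sum_congr rfl
    intro j _
    rw [eval_mul, hevalQ j, add_sub_cancel_left]
    ring
  apply hEq.trans_isBigO
  have hterm : ∀ j : Fin n, (fun y : Fin n → ℂ =>
      (g j (w + y) - (q j).partialSum N y) * eval (w + y) (p j))
      =O[𝓝 0] fun y => ‖y‖ ^ N := by
    intro j
    have h1 := (hq j).isBigO_sub_partialSum_pow N
    have h2 : Filter.Tendsto (fun y : Fin n → ℂ => eval (w + y) (p j)) (𝓝 0)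
        (𝓝 (eval w (p j))) :=
      ((MvPolynomial.continuous_eval (p j)).tendsto w).comp htend
    have h3 := h1.mul (h2.isBigO_one ℝ)
    simpa using h3
  exact Asymptotics.IsBigO.fun_sum fun j _ => hterm j

lemma mem_prod_of_coprime {R : Type*} [CommRing R] {ι : Type*} [DecidableEq ι] (s : Finset ι)
    (J : ι → Ideal R)
    (hco : ∀ i ∈ s, ∀ j ∈ s, i ≠ j → J i ⊔ J j = ⊤) (x : R) (hx : ∀ i ∈ s, x ∈ J i) :
    x ∈ ∏ i ∈ s, J i := by
  induction s using Finset.cons_induction with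
  | empty => simp [Ideal.one_eq_top]
  | cons a s ha ih =>
    rw [Finset.prod_cons]
    have h1 : J a ⊔ ∏ i ∈ s, J i = ⊤ :=
      Ideal.sup_prod_eq_top fun i hi => hco a (Finset.mem_cons_self a s) i
        (Finset.mem_cons_of_mem hi) (by rintro rfl; exact ha hi)
    rw [Ideal.mul_eq_inf_of_coprime h1]
    exact Submodule.mem_inf.mpr ⟨hx a (Finset.mem_cons_self a s),
      ih (fun i hi j hj hij => hco i (Finset.mem_cons_of_mem hi) j (Finset.mem_cons_of_mem hj) hij)
        (fun i hi => hx i (Finset.mem_cons_of_mem hi))⟩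

lemma prod_sup_le {R : Type*} [CommRing R] {ι : Type*} (I : Ideal R) (s : Finset ι)
    (A : ι → Ideal R) :
    (∏ i ∈ s, (I ⊔ A i)) ≤ I ⊔ ∏ i ∈ s, A i := by
  induction s using Finset.cons_induction with
  | empty => simp
  | cons a s ha ih =>
    rw [Finset.prod_cons, Finset.prod_cons]
    calc (I ⊔ A a) * ∏ i ∈ s, (I ⊔ A i)
        ≤ (I ⊔ A a) * (I ⊔ ∏ i ∈ s, A i) := Ideal.mul_mono_right ih
      _ ≤ I ⊔ A a * ∏ i ∈ s, A i := by
          rw [Ideal.sup_mul, Ideal.mul_sup, Ideal.mul_sup]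
          apply sup_le
          · exact sup_le (le_trans Ideal.mul_le_left le_sup_left)
              (le_trans Ideal.mul_le_left le_sup_left)
          · exact sup_le (le_trans Ideal.mul_le_right le_sup_left) le_sup_right

theorem stmt2 {n : ℕ} (p : Fin n → MvPolynomial (Fin n) ℂ)
    (Z : Set (Fin n → ℂ)) (hZ : Z = {z | ∀ j, MvPolynomial.eval z (p j) = 0})
    (hZne : Z.Nonempty) (hZfin : Z.Finite)
    (F : MvPolynomial (Fin n) ℂ)
    (hF : ∀ w ∈ Z, ∃ V : Set (Fin n → ℂ), IsOpen V ∧ w ∈ V ∧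
      ∃ g : Fin n → ((Fin n → ℂ) → ℂ), (∀ j, AnalyticOnNhd ℂ (g j) V) ∧
        ∀ s ∈ V, MvPolynomial.eval s F = ∑ j, g j s * MvPolynomial.eval s (p j)) :
    F ∈ Ideal.span (Set.range p) := by
  classical
  set I := Ideal.span (Set.range p) with hI
  obtain ⟨N₀, hN₀⟩ := Ideal.exists_radical_pow_le_of_fg I (IsNoetherian.noetherian _)
  set N := N₀ + 1 with hN
  have hNrad : I.radical ^ N ≤ I :=
    le_trans (Ideal.pow_le_pow_right (by omega)) hN₀
  have hZL : MvPolynomial.zeroLocus ℂ I = Z := by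
    ext x
    rw [MvPolynomial.mem_zeroLocus_iff, hZ]
    constructor
    · intro h j
      exact h (p j) (Ideal.subset_span (Set.mem_range_self j))
    · intro h f hf
      have : I ≤ RingHom.ker (eval x) := by
        rw [hI, Ideal.span_le]
        rintro _ ⟨j, rfl⟩
        exact h j
      exact this hf
  have hrad : vanishingIdeal ℂ Z = I.radical := by
    rw [← hZL, vanishingIdeal_zeroLocus_eq_radical]
  set m : (Fin n → ℂ) → Ideal (MvPolynomial (Fin n) ℂ) :=
    fun w => vanishingIdeal ℂ ({w} : Set (Fin n → ℂ)) with hm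
  set S := hZfin.toFinset with hS
  -- local step
  have hFw : ∀ w ∈ Z, F ∈ I ⊔ (m w) ^ N := by
    intro w hw
    obtain ⟨V, hV, hwV, g, hg, heq⟩ := hF w hw
    obtain ⟨Q, hQ⟩ := analytic_step p N F w V hV hwV g hg heq
    have hH := bridgeW N w (F - ∑ j, Q j * p j) hQ
    have hle : Ideal.span (Set.range fun i => (X i : MvPolynomial (Fin n) ℂ) - C (w i)) ≤ m w := by
      rw [Ideal.span_le]
      rintro _ ⟨i, rfl⟩
      rw [hm, SetLike.mem_coe, mem_vanishingIdeal_singleton_iff]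
      simp
    have hHm : (F - ∑ j, Q j * p j) ∈ (m w) ^ N := Ideal.pow_right_mono hle N hH
    have hQI : (∑ j, Q j * p j) ∈ I := by
      apply Ideal.sum_mem
      intro j _
      exact Ideal.mul_mem_left _ _ (Ideal.subset_span (Set.mem_range_self j))
    have : F = (F - ∑ j, Q j * p j) + ∑ j, Q j * p j := by ring
    rw [this]
    exact Submodule.add_mem _ (Submodule.mem_sup_right hHm) (Submodule.mem_sup_left hQI)
  -- coprimality
  have hcop : ∀ w ∈ S, ∀ w' ∈ S, w ≠ w' → (I ⊔ (m w) ^ N) ⊔ (I ⊔ (m w') ^ N) = ⊤ := by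
    intro w _ w' _ hne
    have hmax : (m w).IsMaximal := inferInstance
    have hmax' : (m w').IsMaximal := inferInstance
    have hmne : m w ≠ m w' := by
      intro hcontra
      obtain ⟨i, hi⟩ : ∃ i, w i ≠ w' i := by
        by_contra hc; push_neg at hc; exact hne (funext hc)
      have h1 : (X i - C (w i) : MvPolynomial (Fin n) ℂ) ∈ m w := by
        rw [hm, mem_vanishingIdeal_singleton_iff]; simp
      rw [hcontra, hm, mem_vanishingIdeal_singleton_iff] at h1
      simp at h1
      exact hi ((sub_eq_zero.mp h1).symm)
    have hsup : m w ⊔ m w' = ⊤ := hmax.coprime_of_ne hmax' hmne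
    have hpow : (m w) ^ N ⊔ (m w') ^ N = ⊤ := Ideal.pow_sup_pow_eq_top hsup
    rw [eq_top_iff, ← hpow]
    exact sup_le (le_trans le_sup_right le_sup_left) (le_trans le_sup_right le_sup_right)
  have hmemprod : F ∈ ∏ w ∈ S, (I ⊔ (m w) ^ N) :=
    mem_prod_of_coprime S _ hcop F fun w hw => hFw w (hZfin.mem_toFinset.mp hw)
  have hchain : (∏ w ∈ S, (I ⊔ (m w) ^ N)) ≤ I := by
    refine le_trans (prod_sup_le I S _) ?_
    have h1 : (∏ w ∈ S, (m w) ^ N) = (∏ w ∈ S, m w) ^ N := by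
      rw [Finset.prod_pow]
    have h2 : (∏ w ∈ S, m w) ≤ vanishingIdeal ℂ Z := by
      refine le_trans Ideal.prod_le_inf ?_
      intro f hf
      rw [mem_vanishingIdeal_iff]
      intro x hx
      have hfx : f ∈ m x := (Submodule.mem_finsetInf.mp hf) x (hZfin.mem_toFinset.mpr hx)
      rw [hm, mem_vanishingIdeal_singleton_iff] at hfx
      exact hfx
    have h3 : (∏ w ∈ S, (m w) ^ N) ≤ I := by
      rw [h1]
      refine le_trans (Ideal.pow_right_mono h2 N) ?_
      rw [hrad]
      exact hNrad
    exact sup_le le_rfl h3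
  exact hchain hmemprod
end

section
/- Let U ⊆ ℂⁿ be an open set containing Z(p), and let f and g be analytic on U. Suppose that for every w ∈ Z(p) there is an open neighborhood of w on which f and g coincide. Then the unique tuples α[f] and α[g] in ℂ^N, characterized by the property that f − Σ_k α_k[f] s^{β_k} and g − Σ_k α_k[g] s^{β_k} belong locally to the ideal generated by p_1,…,p_n in H(U), coincide: α[f] = α[g]. -/
open MvPolynomial Asymptotics Filter Topology


section AuxStmt3

lemma auxEvalSmul {n : ℕ} {φ : MvPolynomial (Fin n) ℂ} {d : ℕ}
    (hφ : φ.IsHomogeneous d) (t : ℂ) (v : Fin n → ℂ) :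
    MvPolynomial.eval (t • v) φ = t ^ d * MvPolynomial.eval v φ := by
  rw [eval_eq, eval_eq, Finset.mul_sum]
  refine Finset.sum_congr rfl fun u hu => ?_
  have hdeg : u.degree = d := by
    rw [Finsupp.degree_eq_weight_one]
    exact hφ (MvPolynomial.mem_support_iff.mp hu)
  have h1 : ∏ i ∈ u.support, (t • v) i ^ u i
      = t ^ d * ∏ i ∈ u.support, v i ^ u i := by
    simp only [Pi.smul_apply, smul_eq_mul, mul_pow]
    rw [Finset.prod_mul_distrib, Finset.prod_pow_eq_pow_sum]
    congr 1
    rw [← hdeg]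
    rfl
  rw [h1]; ring

lemma lowCoeffZero {n : ℕ} {H : MvPolynomial (Fin n) ℂ} {k : ℕ}
    (hO : (fun y : Fin n → ℂ => MvPolynomial.eval y H) =O[𝓝 0] (fun y => ‖y‖ ^ k)) :
    ∀ d, d < k → MvPolynomial.homogeneousComponent d H = 0 := by
  intro d
  induction d using Nat.strong_induction_on with
  | _ d IH =>
    intro hdk
    apply MvPolynomial.funext
    intro v
    rw [map_zero]
    set D := H.totalDegree with hD
    set a : ℕ → ℂ := fun m => MvPolynomial.eval v (homogeneousComponent m H) with ha
    have hav : ∀ m, m < d → a m = 0 := by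
      intro m hm
      simp [ha, IH m hm (hm.trans hdk)]
    have hΦ : ∀ t : ℂ, MvPolynomial.eval (t • v) H = ∑ m ∈ Finset.range (D + 1), t ^ m * a m := by
      intro t
      conv_lhs => rw [← MvPolynomial.sum_homogeneousComponent H]
      rw [map_sum]
      exact Finset.sum_congr rfl fun m _ =>
        auxEvalSmul (homogeneousComponent_isHomogeneous m H) t v
    set ψ : ℂ → ℂ := fun t => ∑ m ∈ Finset.range (D + 1), t ^ (m - d) * a m with hψ
    have hfact : ∀ t : ℂ, MvPolynomial.eval (t • v) H = t ^ d * ψ t := by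
      intro t
      rw [hΦ, hψ, Finset.mul_sum]
      refine Finset.sum_congr rfl fun m _ => ?_
      rcases lt_or_ge m d with hmd | hmd
      · rw [hav m hmd]; ring
      · rw [← mul_assoc, ← pow_add, Nat.add_sub_cancel' hmd]
    have hψ0 : ψ 0 = a d := by
      show (∑ m ∈ Finset.range (D + 1), (0:ℂ) ^ (m - d) * a m) = a d
      rw [Finset.sum_eq_single d]
      · simp
      · intro m _ hm
        rcases lt_or_ge m d with hmd | hmd
        · rw [hav m hmd]; ring
        · have : m - d ≠ 0 := by omega
          simp [this]
      · intro hd'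
        have hDd : D < d := by
          simp only [Finset.mem_range, not_lt] at hd'
          omega
        have : homogeneousComponent d H = 0 :=
          MvPolynomial.homogeneousComponent_eq_zero d H hDd
        simp [ha, this]
    -- continuity of ψ
    have hψcont : Continuous ψ := by
      apply continuous_finset_sum
      intro m _
      exact (continuous_pow _).mul continuous_const
    have hlim1 : Tendsto ψ (𝓝[≠] (0:ℂ)) (𝓝 (a d)) := by
      rw [← hψ0]
      exact (hψcont.tendsto 0).mono_left nhdsWithin_le_nhds
    -- bound
    obtain ⟨C, hC⟩ := hO.bound
    have hsm : Tendsto (fun t : ℂ => t • v) (𝓝 0) (𝓝 0) := by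
      have : Tendsto (fun t : ℂ => t • v) (𝓝 0) (𝓝 ((0:ℂ) • v)) :=
        (continuous_id.smul continuous_const).tendsto 0
      simpa using this
    have hbound : ∀ᶠ t : ℂ in 𝓝[≠] 0, ‖ψ t‖ ≤ (C * ‖v‖ ^ k) * ‖t‖ ^ (k - d) := by
      filter_upwards [nhdsWithin_le_nhds (hsm.eventually hC), self_mem_nhdsWithin] with t ht htne
      have ht0 : t ≠ 0 := htne
      have htne' : (0:ℝ) < ‖t‖ ^ d := pow_pos (norm_pos_iff.mpr ht0) d
      rw [← mul_le_mul_iff_right₀ htne']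
      calc ‖t‖ ^ d * ‖ψ t‖ = ‖t ^ d * ψ t‖ := by rw [norm_mul, norm_pow]
        _ = ‖MvPolynomial.eval (t • v) H‖ := by rw [hfact]
        _ ≤ C * ‖‖t • v‖ ^ k‖ := ht
        _ = C * (‖t‖ * ‖v‖) ^ k := by
            rw [norm_pow, norm_norm, norm_smul]
        _ = ‖t‖ ^ d * ((C * ‖v‖ ^ k) * ‖t‖ ^ (k - d)) := by
            have hk : ‖t‖ ^ k = ‖t‖ ^ d * ‖t‖ ^ (k - d) := by
              rw [← pow_add]; congr 1; omega
            rw [mul_pow, hk]; ring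
    have hlim2 : Tendsto ψ (𝓝[≠] (0:ℂ)) (𝓝 0) := by
      apply squeeze_zero_norm' hbound
      have h1 : Tendsto (fun t : ℂ => (C * ‖v‖ ^ k) * ‖t‖ ^ (k - d)) (𝓝 0) (𝓝 0) := by
        have hkd : k - d ≠ 0 := by omega
        have : Continuous fun t : ℂ => (C * ‖v‖ ^ k) * ‖t‖ ^ (k - d) := by
          continuity
        have h0 := this.tendsto 0
        simpa [norm_zero, zero_pow hkd] using h0
      exact h1.mono_left nhdsWithin_le_nhds
    have : a d = 0 := tendsto_nhds_unique hlim1 hlim2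
    simpa [ha] using this

lemma highDegMem {n : ℕ} {H : MvPolynomial (Fin n) ℂ} {k : ℕ}
    (h : ∀ d, d < k → MvPolynomial.homogeneousComponent d H = 0) :
    H ∈ (Ideal.span (Set.range (X : Fin n → MvPolynomial (Fin n) ℂ))) ^ k := by
  classical
  have hco : ∀ u : (Fin n) →₀ ℕ, u ∈ H.support → k ≤ u.degree := by
    intro u hu
    by_contra hlt
    push_neg at hlt
    have h0 := h u.degree hlt
    have : coeff u H = 0 := by
      have := congrArg (coeff u) h0
      rwa [coeff_homogeneousComponent, if_pos rfl, coeff_zero] at this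
    exact (MvPolynomial.mem_support_iff.mp hu) this
  rw [← MvPolynomial.support_sum_monomial_coeff H]
  apply Ideal.sum_mem
  intro u hu
  rw [monomial_eq]
  apply Ideal.mul_mem_left
  have hmem : (u.prod fun i e => (X i : MvPolynomial (Fin n) ℂ) ^ e)
      ∈ (Ideal.span (Set.range (X : Fin n → MvPolynomial (Fin n) ℂ))) ^ u.degree := by
    rw [Finsupp.prod]
    have : (Ideal.span (Set.range (X : Fin n → MvPolynomial (Fin n) ℂ))) ^ u.degree
        = ∏ i ∈ u.support, (Ideal.span (Set.range (X : Fin n → MvPolynomial (Fin n) ℂ))) ^ u i := by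
      rw [Finset.prod_pow_eq_pow_sum]
      rfl
    rw [this]
    exact Ideal.prod_mem_prod fun i _ =>
      Ideal.pow_mem_pow (Ideal.subset_span (Set.mem_range_self i)) _
  exact Ideal.pow_le_pow_right (hco u hu) hmem

lemma memVanishingPow {n : ℕ} {G : MvPolynomial (Fin n) ℂ} {w : Fin n → ℂ} {k : ℕ}
    (hO : (fun x => MvPolynomial.eval x G) =O[𝓝 w] (fun x => ‖x - w‖ ^ k)) :
    G ∈ (MvPolynomial.vanishingIdeal ℂ ({w} : Set (Fin n → ℂ))) ^ k := by
  classical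
  set H : MvPolynomial (Fin n) ℂ := aeval (fun i => X i + C (w i)) G with hH
  have hevalH : ∀ y : Fin n → ℂ, MvPolynomial.eval y H = MvPolynomial.eval (y + w) G := by
    intro y
    rw [hH, aeval_def, MvPolynomial.algebraMap_eq, ← eval_assoc]
    have h : (⇑(MvPolynomial.eval y) ∘ fun i => X i + C (w i)) = y + w := by
      funext i; simp
    rw [h]
  -- transfer the bound
  have hOH : (fun y : Fin n → ℂ => MvPolynomial.eval y H) =O[𝓝 0] (fun y => ‖y‖ ^ k) := by
    have htend : Filter.Tendsto (fun y : Fin n → ℂ => y + w) (𝓝 0) (𝓝 w) := by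
      have := (continuous_add_right w).tendsto (0 : Fin n → ℂ)
      simpa using this
    have := hO.comp_tendsto htend
    simp only [Function.comp_def, add_sub_cancel_right] at this
    simpa only [hevalH] using this
  have hHmem : H ∈ (Ideal.span (Set.range (X : Fin n → MvPolynomial (Fin n) ℂ))) ^ k :=
    highDegMem (lowCoeffZero hOH)
  -- map back
  have hback : G = aeval (fun i => X i - C (w i)) H := by
    rw [hH,
      show (aeval (fun i => X i - C (w i)) (aeval (fun i => X i + C (w i)) G))
        = ((aeval (fun i => X i - C (w i))).comp
            (aeval (fun i => (X i : MvPolynomial (Fin n) ℂ) + C (w i)))) G from rfl,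
      comp_aeval]
    simp
  set φ : MvPolynomial (Fin n) ℂ →+* MvPolynomial (Fin n) ℂ :=
    (aeval (fun i => X i - C (w i)) : MvPolynomial (Fin n) ℂ →ₐ[ℂ] MvPolynomial (Fin n) ℂ).toRingHom with hφ
  have hmap : φ H ∈ (Ideal.map φ (Ideal.span (Set.range (X : Fin n → MvPolynomial (Fin n) ℂ)))) ^ k := by
    rw [← Ideal.map_pow]
    exact Ideal.mem_map_of_mem φ hHmem
  have hle : Ideal.map φ (Ideal.span (Set.range (X : Fin n → MvPolynomial (Fin n) ℂ)))
      ≤ MvPolynomial.vanishingIdeal ℂ ({w} : Set (Fin n → ℂ)) := by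
    rw [Ideal.map_span, Ideal.span_le]
    rintro x ⟨y, ⟨i, rfl⟩, rfl⟩
    rw [SetLike.mem_coe]
    have : MvPolynomial.eval w (φ (X i)) = 0 := by simp [hφ]
    exact (MvPolynomial.mem_vanishingIdeal_singleton_iff w _).mpr this
  have : φ H ∈ (MvPolynomial.vanishingIdeal ℂ ({w} : Set (Fin n → ℂ))) ^ k :=
    Ideal.pow_right_mono hle k hmap
  have hGH : G = φ H := hback
  rwa [← hGH] at this

lemma keyLocal {n k : ℕ} (p : Fin n → MvPolynomial (Fin n) ℂ) (P : MvPolynomial (Fin n) ℂ)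
    (w : Fin n → ℂ) (V : Set (Fin n → ℂ)) (hV : IsOpen V) (hwV : w ∈ V)
    (q : Fin n → (Fin n → ℂ) → ℂ) (hq : ∀ j, AnalyticOnNhd ℂ (q j) V)
    (heq : ∀ s ∈ V, MvPolynomial.eval s P = ∑ j, q j s * MvPolynomial.eval s (p j)) :
    P ∈ Ideal.span (Set.range p) ⊔ (MvPolynomial.vanishingIdeal ℂ ({w} : Set (Fin n → ℂ))) ^ k := by
  classical
  choose ps hps using fun j => (hq j w hwV)
  set T : Fin n → MvPolynomial (Fin n) ℂ := fun j =>
    ∑ m ∈ Finset.range k, ∑ d : Fin m → Fin n,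
      C (ps j m fun i => Pi.single (d i) 1) * ∏ i, (X (d i) - C (w (d i))) with hT
  have hTeval : ∀ j x, MvPolynomial.eval x (T j) = (ps j).partialSum k (x - w) := by
    intro j x
    rw [hT]
    simp only [map_sum, FormalMultilinearSeries.partialSum]
    refine Finset.sum_congr rfl fun m _ => ?_
    have hx : (fun _ : Fin m => x - w)
        = fun _ : Fin m => ∑ i : Fin n, (x i - w i) • (Pi.single i 1 : Fin n → ℂ) := by
      funext _
      funext a
      simp [Pi.single_apply, Finset.sum_ite_eq']
    rw [hx, ContinuousMultilinearMap.map_sum]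
    refine Finset.sum_congr rfl fun d _ => ?_
    rw [ContinuousMultilinearMap.map_smul_univ]
    simp only [map_mul, eval_C, map_prod, map_sub, eval_X, smul_eq_mul]
    rw [mul_comm]
  have hTI : (∑ j, T j * p j) ∈ Ideal.span (Set.range p) :=
    Ideal.sum_mem _ fun j _ => Ideal.mul_mem_left _ _ (Ideal.subset_span (Set.mem_range_self j))
  set G : MvPolynomial (Fin n) ℂ := P - ∑ j, T j * p j with hG
  have hGO : (fun x => MvPolynomial.eval x G) =O[𝓝 w] fun x => ‖x - w‖ ^ k := by
    have hEv : ∀ᶠ x in 𝓝 w, MvPolynomial.eval x G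
        = ∑ j, (q j x - (ps j).partialSum k (x - w)) * MvPolynomial.eval x (p j) := by
      filter_upwards [hV.mem_nhds hwV] with x hx
      rw [hG]
      simp only [map_sub, map_sum, map_mul, heq x hx, hTeval, sub_mul, Finset.sum_sub_distrib]
    have h1 : ∀ j, (fun x => q j x - (ps j).partialSum k (x - w)) =O[𝓝 w]
        fun x => ‖x - w‖ ^ k := by
      intro j
      have hB := (hps j).isBigO_sub_partialSum_pow k
      have hmap : Tendsto (fun x : Fin n → ℂ => x - w) (𝓝 w) (𝓝 0) := by
        have := (continuous_sub_right w).tendsto w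
        simpa using this
      have := hB.comp_tendsto hmap
      simp only [Function.comp_def, add_sub_cancel] at this
      simpa using this
    have h2 : ∀ j : Fin n, (fun x => MvPolynomial.eval x (p j)) =O[𝓝 w]
        (fun _ => (1:ℝ)) := fun j => ((MvPolynomial.continuous_eval (p := p j)).tendsto w).isBigO_one ℝ
    have hsum : (fun x => ∑ j, (q j x - (ps j).partialSum k (x - w)) * MvPolynomial.eval x (p j))
        =O[𝓝 w] fun x => ‖x - w‖ ^ k := by
      exact IsBigO.fun_sum (A := fun j (x : Fin n → ℂ) =>
          (q j x - (ps j).partialSum k (x - w)) * MvPolynomial.eval x (p j))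
        (g := fun x => ‖x - w‖ ^ k) (fun j _ => by simpa using (h1 j).mul (h2 j))
    exact hsum.congr' (hEv.mono fun x hx => hx.symm) EventuallyEq.rfl
  have hGmem : G ∈ (MvPolynomial.vanishingIdeal ℂ ({w} : Set (Fin n → ℂ))) ^ k :=
    memVanishingPow hGO
  have hPsplit : P = (∑ j, T j * p j) + G := by rw [hG]; ring
  rw [hPsplit]
  exact Ideal.add_mem _ (Ideal.mem_sup_left hTI) (Ideal.mem_sup_right hGmem)

lemma memProdOfMemPow {A : Type*} [CommRing A] (s : Finset (Ideal A))
    (hmax : ∀ M ∈ s, M.IsMaximal) (x : A) (k : ℕ)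
    (hx : ∀ M ∈ s, x ∈ M ^ k) : x ∈ ∏ M ∈ s, M ^ k := by
  classical
  induction s using Finset.induction with
  | empty => simp
  | @insert M s hMs IH =>
    rw [Finset.prod_insert hMs]
    have hcop : M ^ k ⊔ (∏ M' ∈ s, M' ^ k) = ⊤ := by
      refine Ideal.isCoprime_iff_sup_eq.mp ?_
      refine IsCoprime.pow_left ?_
      refine IsCoprime.prod_right fun M' hM' => ?_
      refine IsCoprime.pow_right ?_
      refine Ideal.isCoprime_iff_sup_eq.mpr ?_
      exact (hmax M (Finset.mem_insert_self M s)).coprime_of_ne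
        (hmax M' (Finset.mem_insert_of_mem hM')) (by rintro rfl; exact hMs hM')
    rw [Ideal.mul_eq_inf_of_coprime hcop]
    exact ⟨hx M (Finset.mem_insert_self M s),
      IH (fun M' hM' => hmax M' (Finset.mem_insert_of_mem hM'))
        (fun M' hM' => hx M' (Finset.mem_insert_of_mem hM'))⟩

end AuxStmt3

set_option maxHeartbeats 1000000 in
set_option synthInstance.maxHeartbeats 400000 in
theorem stmt3 {n N : ℕ} (p : Fin n → MvPolynomial (Fin n) ℂ)
    (Z : Set (Fin n → ℂ)) (hZ : Z = {z | ∀ j, MvPolynomial.eval z (p j) = 0})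
    (hZne : Z.Nonempty) (hZfin : Z.Finite)
    (β : Fin N → Fin n → ℕ)
    (B : Module.Basis (Fin N) ℂ (MvPolynomial (Fin n) ℂ ⧸ Ideal.span (Set.range p)))
    (hB : ∀ k, B k = Ideal.Quotient.mk (Ideal.span (Set.range p))
      (∏ i, MvPolynomial.X i ^ β k i))
    (U : Set (Fin n → ℂ)) (hU : IsOpen U) (hZU : Z ⊆ U)
    (f g : (Fin n → ℂ) → ℂ) (hf : AnalyticOnNhd ℂ f U) (hg : AnalyticOnNhd ℂ g U)
    (hfg : ∀ w ∈ Z, ∃ V : Set (Fin n → ℂ), IsOpen V ∧ w ∈ V ∧ ∀ s ∈ V, f s = g s)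
    (αf αg : Fin N → ℂ)
    (hαf : MemLocalIdeal U p (fun s => f s - ∑ k, αf k * ∏ i, s i ^ β k i))
    (hαg : MemLocalIdeal U p (fun s => g s - ∑ k, αg k * ∏ i, s i ^ β k i)) :
    αf = αg := by
  classical
  set c : Fin N → ℂ := fun k => αf k - αg k with hc
  set P : MvPolynomial (Fin n) ℂ := ∑ k, C (c k) * ∏ i, X i ^ β k i with hP
  have hPeval : ∀ s : Fin n → ℂ, MvPolynomial.eval s P = ∑ k, c k * ∏ i, s i ^ β k i := by
    intro s
    rw [hP]
    simp [map_sum]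
  -- local decomposition of P near points of Z
  have hloc : ∀ w ∈ Z, ∃ V : Set (Fin n → ℂ), IsOpen V ∧ w ∈ V ∧
      ∃ q : Fin n → ((Fin n → ℂ) → ℂ), (∀ j, AnalyticOnNhd ℂ (q j) V) ∧
        ∀ s ∈ V, MvPolynomial.eval s P = ∑ j, q j s * MvPolynomial.eval s (p j) := by
    intro w hw
    obtain ⟨V₁, hV₁o, _, hwV₁, qf, hqf, hfid⟩ := hαf w (hZU hw)
    obtain ⟨V₂, hV₂o, _, hwV₂, qg, hqg, hgid⟩ := hαg w (hZU hw)
    obtain ⟨V₃, hV₃o, hwV₃, hfg3⟩ := hfg w hw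
    refine ⟨V₁ ∩ V₂ ∩ V₃, (hV₁o.inter hV₂o).inter hV₃o, ⟨⟨hwV₁, hwV₂⟩, hwV₃⟩,
      fun j s => qg j s - qf j s, fun j => ((hqg j).mono ?_).sub ((hqf j).mono ?_), ?_⟩
    · intro x hx; exact hx.1.2
    · intro x hx; exact hx.1.1
    · intro s hs
      have h1 := hfid s hs.1.1
      have h2 := hgid s hs.1.2
      beta_reduce at h1 h2
      have h3 := hfg3 s hs.2
      have : MvPolynomial.eval s P
          = (g s - ∑ k, αg k * ∏ i, s i ^ β k i) - (f s - ∑ k, αf k * ∏ i, s i ^ β k i) := by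
        rw [hPeval, h3]
        simp only [hc, sub_mul, Finset.sum_sub_distrib]
        ring
      rw [this, h2, h1, ← Finset.sum_sub_distrib]
      exact Finset.sum_congr rfl fun j _ => by ring
  -- quotient algebra
  have hMF : Module.Finite ℂ (MvPolynomial (Fin n) ℂ ⧸ Ideal.span (Set.range p)) :=
    Module.Finite.of_basis B
  have hart : IsArtinianRing (MvPolynomial (Fin n) ℂ ⧸ Ideal.span (Set.range p)) := IsArtinianRing.of_finite ℂ _
  obtain ⟨k, hk⟩ :=
    IsArtinianRing.isNilpotent_jacobson_bot (R := MvPolynomial (Fin n) ℂ ⧸ Ideal.span (Set.range p))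
  set π : MvPolynomial (Fin n) ℂ →+* MvPolynomial (Fin n) ℂ ⧸ Ideal.span (Set.range p) := Ideal.Quotient.mk (Ideal.span (Set.range p)) with hπ
  have hsurj : Function.Surjective π := Ideal.Quotient.mk_surjective
  -- every maximal ideal of the quotient contains (π P) to the k-th power
  have hPM : ∀ M : Ideal (MvPolynomial (Fin n) ℂ ⧸ Ideal.span (Set.range p)), M.IsMaximal → π P ∈ M ^ k := by
    intro M hM
    have hmmax : (Ideal.comap π M).IsMaximal := Ideal.comap_isMaximal_of_surjective π hsurj
    obtain ⟨w, hw⟩ := (MvPolynomial.isMaximal_iff_eq_vanishingIdeal_singleton).mp hmmax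
    have hIm : Ideal.span (Set.range p) ≤ Ideal.comap π M := by
      intro x hx
      have : π x = 0 := Ideal.Quotient.eq_zero_iff_mem.mpr hx
      simp [Ideal.mem_comap, this]
    have hwZ : w ∈ Z := by
      rw [hZ]
      intro j
      have hpj : p j ∈ Ideal.comap π M := hIm (Ideal.subset_span (Set.mem_range_self j))
      rw [hw] at hpj
      exact (MvPolynomial.mem_vanishingIdeal_singleton_iff w (p j)).mp hpj
    obtain ⟨V, hVo, hwV, q, hq, heq⟩ := hloc w hwZ
    have hmem := keyLocal (k := k) p P w V hVo hwV q hq heq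
    rw [Submodule.mem_sup] at hmem
    obtain ⟨a, haI, b, hb, hab⟩ := hmem
    have hπa : π a = 0 := Ideal.Quotient.eq_zero_iff_mem.mpr haI
    have hπP : π P = π b := by rw [← hab, map_add, hπa, zero_add]
    have hmapeq : Ideal.map π (MvPolynomial.vanishingIdeal ℂ ({w} : Set (Fin n → ℂ))) = M := by
      rw [← hw]
      exact Ideal.map_comap_of_surjective π hsurj M
    have : π b ∈ M ^ k := by
      rw [← hmapeq, ← Ideal.map_pow]
      exact Ideal.mem_map_of_mem π hb
    rwa [hπP]
  -- conclude π P = 0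
  have hfinmax : {M : Ideal (MvPolynomial (Fin n) ℂ ⧸ Ideal.span (Set.range p)) | M.IsMaximal}.Finite :=
    (IsArtinianRing.setOfPred_isPrime_finite _).subset fun M hM => hM.isPrime
  set ms : Finset (Ideal (MvPolynomial (Fin n) ℂ ⧸ Ideal.span (Set.range p))) := hfinmax.toFinset with hms
  have h1 : π P ∈ ∏ M ∈ ms, M ^ k :=
    memProdOfMemPow ms (fun M hM => hfinmax.mem_toFinset.mp hM) (π P) k
      (fun M hM => hPM M (hfinmax.mem_toFinset.mp hM))
  have h2 : (∏ M ∈ ms, M ^ k) ≤ ⊥ := by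
    rw [Finset.prod_pow]
    have hle : (∏ M ∈ ms, M) ≤ Ideal.jacobson (⊥ : Ideal (MvPolynomial (Fin n) ℂ ⧸ Ideal.span (Set.range p))) := by
      rw [Ideal.jacobson]
      apply le_sInf
      rintro J ⟨-, hJmax⟩
      exact le_trans Ideal.prod_le_inf (Finset.inf_le (hfinmax.mem_toFinset.mpr hJmax))
    calc (∏ M ∈ ms, M) ^ k ≤ (Ideal.jacobson (⊥ : Ideal (MvPolynomial (Fin n) ℂ ⧸ Ideal.span (Set.range p)))) ^ k :=
          Ideal.pow_right_mono hle k
      _ = ⊥ := hk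
  have hπP0 : π P = 0 := by
    simpa using h2 h1
  -- conclude via linear independence
  have hπsum : π P = ∑ k', c k' • B k' := by
    rw [hP, map_sum]
    refine Finset.sum_congr rfl fun k' _ => ?_
    rw [hB k', map_mul]
    rw [show π (C (c k')) = algebraMap ℂ (MvPolynomial (Fin n) ℂ ⧸ Ideal.span (Set.range p)) (c k') from rfl]
    rw [← Algebra.smul_def]
  have hsum0 : ∑ k', c k' • B k' = 0 := by rw [← hπsum, hπP0]
  have hc0 : ∀ k', c k' = 0 := Fintype.linearIndependent_iff.mp B.linearIndependent c hsum0
  funext k'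
  have hck := hc0 k'
  rw [hc] at hck
  exact sub_eq_zero.mp hck
end

section
/- Let I be a proper ideal of ℂ[x_1,…,x_n] such that the quotient ℂ[x_1,…,x_n]/I is a finite-dimensional ℂ-vector space. Then dim_ℂ (ℂ[x_1,…,x_n]/I) = Σ_{w ∈ Z(I)} ν_w(I), the sum of the multiplicities over the (finitely many) points of the zero set Z(I). -/
set_option synthInstance.maxHeartbeats 1000000
set_option maxHeartbeats 2000000

open Ideal

lemma finsetInfEqProd {R ι : Type*} [CommRing R] (s : Finset ι) (f : ι → Ideal R)
    (h : Set.Pairwise ↑s (Function.onFun IsCoprime f)) : (⨅ i ∈ s, f i) = ∏ i ∈ s, f i := by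
  classical
  induction s using Finset.induction with
  | empty => simp
  | @insert a s' ha ih =>
    rw [Finset.iInf_insert, Finset.prod_insert ha, ← ih (h.mono (by intro x hx; simp [hx]))]
    exact inf_eq_mul_of_isCoprime <| Ideal.isCoprime_biInf fun j hj =>
      h (Finset.mem_insert_self a s') (Finset.mem_insert_of_mem hj)
        (fun hEq => ha (hEq ▸ hj))

lemma spanEq {n : ℕ} (w : Fin n → ℂ) :
    Ideal.span (Set.range fun i => MvPolynomial.X i - MvPolynomial.C (w i)) =
      MvPolynomial.vanishingIdeal ℂ {w} := by
  apply le_antisymm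
  · rw [Ideal.span_le]
    rintro _ ⟨i, rfl⟩
    rw [SetLike.mem_coe, MvPolynomial.mem_vanishingIdeal_singleton_iff]
    simp
  · intro p hp
    rw [MvPolynomial.mem_vanishingIdeal_singleton_iff] at hp
    change MvPolynomial.eval w p = 0 at hp
    have key : ∀ q : MvPolynomial (Fin n) ℂ,
        q - MvPolynomial.C (MvPolynomial.eval w q) ∈
          Ideal.span (Set.range fun i => MvPolynomial.X i - MvPolynomial.C (w i)) := by
      intro q
      induction q using MvPolynomial.induction_on with
      | C a => simp
      | add q r hq hr =>
        have h2 := Ideal.add_mem _ hq hr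
        have h3 : q + r - MvPolynomial.C (MvPolynomial.eval w (q + r)) =
            (q - MvPolynomial.C (MvPolynomial.eval w q)) + (r - MvPolynomial.C (MvPolynomial.eval w r)) := by
          rw [map_add, MvPolynomial.C_add]; ring
        rwa [h3]
      | mul_X q i hq =>
        have h1 : q * MvPolynomial.X i - MvPolynomial.C (MvPolynomial.eval w (q * MvPolynomial.X i))
            = q * (MvPolynomial.X i - MvPolynomial.C (w i))
              + (q - MvPolynomial.C (MvPolynomial.eval w q)) * MvPolynomial.C (w i) := by
          rw [_root_.map_mul, MvPolynomial.eval_X, MvPolynomial.C_mul]; ring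
        rw [h1]
        exact Ideal.add_mem _
          (Ideal.mul_mem_left _ _ (Ideal.subset_span ⟨i, rfl⟩))
          (Ideal.mul_mem_right _ _ hq)
    have := key p
    rwa [hp, map_zero, sub_zero] at this

open Classical in

noncomputable def Fq {R : Type*} [CommRing R] [Algebra ℂ R] (J : Ideal R) : ℕ :=
  if h : J.IsPrime then Module.finrank ℂ (Localization (@Ideal.primeCompl _ _ J h)) else 0

theorem coreLemma {R : Type*} [CommRing R] [Algebra ℂ R] [FiniteDimensional ℂ R]
    (s : Finset (Ideal R)) (hs : ∀ J, J ∈ s ↔ J.IsMaximal) :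
    Module.finrank ℂ R = ∑ J ∈ s, Fq J := by
  classical
  have hart : IsArtinianRing R := isArtinian_of_tower ℂ inferInstance
  obtain ⟨k, hk⟩ := IsArtinianRing.isNilpotent_jacobson_bot (R := R)
  set K := k + 1 with hKdef
  have hK0 : K ≠ 0 := Nat.succ_ne_zero k
  have hKnil : (⊥ : Ideal R).jacobson ^ K = ⊥ := by
    rw [pow_succ, hk, Ideal.zero_eq_bot, bot_mul]
  set f : ↥s → Ideal R := fun m => (m : Ideal R) ^ K with hf
  have copPair : Pairwise (Function.onFun IsCoprime f) := by
    intro a b hab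
    exact (Ideal.isCoprime_iff_sup_eq.mpr
      (((hs a.1).mp a.2).coprime_of_ne ((hs b.1).mp b.2) (fun h => hab (Subtype.ext h)))).pow
  have hinf : (⨅ m : ↥s, f m) = ⊥ := by
    apply le_antisymm _ bot_le
    have h1 : (⨅ m : ↥s, f m) = ⨅ m ∈ s, (m : Ideal R) ^ K := by
      rw [iInf_subtype]
    have hpw : Set.Pairwise ↑s (Function.onFun IsCoprime fun m : Ideal R => m ^ K) := by
      intro a ha b hb hab
      exact (Ideal.isCoprime_iff_sup_eq.mpr
        (((hs a).mp ha).coprime_of_ne ((hs b).mp hb) hab)).pow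
    rw [h1, finsetInfEqProd s (fun m => m ^ K) hpw, Finset.prod_pow]
    calc (∏ m ∈ s, m) ^ K ≤ (⊥ : Ideal R).jacobson ^ K := by
          apply Ideal.pow_right_mono
          refine le_sInf fun J hJ => ?_
          exact le_trans Ideal.prod_le_inf (Finset.inf_le ((hs J).mpr hJ.2))
      _ = ⊥ := hKnil
  -- CRT equivalence
  let e : R ≃+* ∀ m : ↥s, R ⧸ f m :=
    (RingEquiv.quotientBot R).symm.trans ((Ideal.quotEquivOfEq hinf.symm).trans
      (Ideal.quotientInfRingEquivPiQuotient f copPair))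
  have ecomm : ∀ c : ℂ, e (algebraMap ℂ R c) = algebraMap ℂ (∀ m : ↥s, R ⧸ f m) c := by
    intro c
    funext m
    rfl
  let ea : R ≃ₐ[ℂ] ∀ m : ↥s, R ⧸ f m := AlgEquiv.ofRingEquiv ecomm
  haveI hfd : ∀ m : ↥s, Module.Finite ℂ (R ⧸ f m) := fun m =>
    Module.Finite.of_surjective (Ideal.Quotient.mkₐ ℂ (f m)).toLinearMap
      (Ideal.Quotient.mkₐ_surjective ℂ _)
  -- localization identification
  have hloc : ∀ (J : Ideal R) (hJ : J ∈ s),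
      @IsLocalization _ _ (@Ideal.primeCompl _ _ J ((hs J).mp hJ).isPrime)
        (R ⧸ (J ^ K : Ideal R)) _ _ := by
    intro J hJ
    have hmax : J.IsMaximal := (hs J).mp hJ
    haveI : J.IsPrime := hmax.isPrime
    refine { map_units := ?_, surj := ?_, exists_of_eq := ?_ }
    · rintro ⟨y, hy⟩
      obtain ⟨a, c, hc, habc⟩ := hmax.exists_inv hy
      have hnil : IsNilpotent (Ideal.Quotient.mk (J ^ K) c) := by
        refine ⟨K, ?_⟩
        rw [← map_pow, Ideal.Quotient.eq_zero_iff_mem]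
        exact Ideal.pow_mem_pow hc K
      have hu : IsUnit (Ideal.Quotient.mk (J ^ K) a * Ideal.Quotient.mk (J ^ K) y) := by
        rw [← _root_.map_mul]
        have : a * y = 1 - c := by linear_combination habc
        rw [this, map_sub, map_one]
        exact hnil.isUnit_one_sub
      rw [Ideal.Quotient.algebraMap_eq]
      exact isUnit_of_mul_isUnit_right hu
    · intro z
      obtain ⟨r, rfl⟩ := Ideal.Quotient.mk_surjective z
      refine ⟨(r, 1), ?_⟩
      simp [Ideal.Quotient.algebraMap_eq]
    · intro x y hxy
      rw [Ideal.Quotient.algebraMap_eq, Ideal.Quotient.eq] at hxy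
      obtain ⟨c, hc⟩ := Ideal.pi_quotient_surjective (I := f)
        (fun a b hab => copPair hab) (fun m => if m.1 = J then 1 else 0)
      have hc1 : Ideal.Quotient.mk (J ^ K) c = 1 := by
        have := hc ⟨J, hJ⟩
        simpa using this
      have hcnot : c ∉ J := by
        intro hcJ
        have h1c : c - 1 ∈ J ^ K := by
          rw [← Ideal.Quotient.eq]
          simpa using hc1
        have : (1 : R) ∈ J := by
          have := J.sub_mem hcJ (Ideal.pow_le_self hK0 h1c)
          simpa using this
        exact hmax.ne_top (Ideal.eq_top_of_isUnit_mem _ this isUnit_one)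
      refine ⟨⟨c, hcnot⟩, ?_⟩
      have hmem : c * (x - y) ∈ (⊥ : Ideal R) := by
        rw [← hinf, Ideal.mem_iInf]
        intro m
        by_cases hm : m.1 = J
        · have : x - y ∈ f m := by rw [hf]; simp only [hm]; exact hxy
          exact Ideal.mul_mem_left _ _ this
        · have : c ∈ f m := by
            rw [← Ideal.Quotient.eq_zero_iff_mem]
            have := hc m
            simpa [hm] using this
          exact Ideal.mul_mem_right _ _ this
      have : c * (x - y) = 0 := by simpa using hmem
      show c * x = c * y
      have h0 : c * x - c * y = 0 := by rw [← mul_sub]; exact this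
      exact sub_eq_zero.mp h0
  have h2 : Module.finrank ℂ R = ∑ m : ↥s, Module.finrank ℂ (R ⧸ f m) := by
    rw [ea.toLinearEquiv.finrank_eq, Module.finrank_pi_fintype]
  rw [h2, ← Finset.sum_coe_sort s (fun J => Fq J)]
  refine Finset.sum_congr rfl fun m _ => ?_
  have hp : (m.1 : Ideal R).IsPrime := ((hs m.1).mp m.2).isPrime
  unfold Fq
  rw [dif_pos hp]
  haveI := hloc m.1 m.2
  exact (((IsLocalization.algEquiv (m.1 : Ideal R).primeCompl
    (Localization (m.1 : Ideal R).primeCompl)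
    (R ⧸ ((m.1 : Ideal R) ^ K))).restrictScalars ℂ).toLinearEquiv.finrank_eq).symm

theorem stmt9 {n : ℕ} (I : Ideal (MvPolynomial (Fin n) ℂ)) (hI : I ≠ ⊤)
    [FiniteDimensional ℂ (MvPolynomial (Fin n) ℂ ⧸ I)]
    (hfin : {z : Fin n → ℂ | ∀ p ∈ I, MvPolynomial.eval z p = 0}.Finite)
    (hprime : ∀ w ∈ {z : Fin n → ℂ | ∀ p ∈ I, MvPolynomial.eval z p = 0},
      (Ideal.map (Ideal.Quotient.mk I)
        (Ideal.span (Set.range fun i => MvPolynomial.X i - MvPolynomial.C (w i)))).IsPrime) :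
    Module.finrank ℂ (MvPolynomial (Fin n) ℂ ⧸ I) =
      ∑ w ∈ hfin.toFinset.attach,
        Module.finrank ℂ (Localization (@Ideal.primeCompl _ _
          (Ideal.map (Ideal.Quotient.mk I)
            (Ideal.span (Set.range fun i => MvPolynomial.X i - MvPolynomial.C (w.1 i))))
          (hprime w.1 (hfin.mem_toFinset.mp w.2)))) := by
  classical
  set Z := {z : Fin n → ℂ | ∀ p ∈ I, MvPolynomial.eval z p = 0} with hZ
  set g : (Fin n → ℂ) → Ideal (MvPolynomial (Fin n) ℂ ⧸ I) := fun w =>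
    Ideal.map (Ideal.Quotient.mk I)
      (Ideal.span (Set.range fun i => MvPolynomial.X i - MvPolynomial.C (w i))) with hg
  haveI : IsArtinianRing (MvPolynomial (Fin n) ℂ ⧸ I) := isArtinian_of_tower ℂ inferInstance
  have hIle : ∀ w ∈ Z, I ≤ Ideal.span (Set.range fun i =>
      MvPolynomial.X i - MvPolynomial.C (w i)) := by
    intro w hw
    rw [spanEq w]
    intro p hp
    rw [MvPolynomial.mem_vanishingIdeal_singleton_iff]
    exact hw p hp
  have hmem : ∀ J, J ∈ Finset.image g hfin.toFinset ↔ J.IsMaximal := by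
    intro J
    constructor
    · rw [Finset.mem_image]
      rintro ⟨w, hw, rfl⟩
      haveI := hprime w (hfin.mem_toFinset.mp hw)
      exact IsArtinianRing.isMaximal_of_isPrime _
    · intro hJ
      have hcm : (Ideal.comap (Ideal.Quotient.mk I) J).IsMaximal :=
        Ideal.comap_isMaximal_of_surjective _ Ideal.Quotient.mk_surjective
      obtain ⟨w, hw⟩ :=
        (MvPolynomial.isMaximal_iff_eq_vanishingIdeal_singleton).mp hcm
      have hwZ : w ∈ Z := by
        intro p hp
        change MvPolynomial.aeval w p = 0
        rw [← MvPolynomial.mem_vanishingIdeal_singleton_iff, ← hw]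
        show Ideal.Quotient.mk I p ∈ J
        rw [Ideal.Quotient.eq_zero_iff_mem.mpr hp]
        exact J.zero_mem
      rw [Finset.mem_image]
      refine ⟨w, hfin.mem_toFinset.mpr hwZ, ?_⟩
      rw [hg]
      show Ideal.map (Ideal.Quotient.mk I) _ = J
      rw [spanEq w, ← hw, Ideal.map_comap_of_surjective _ Ideal.Quotient.mk_surjective]
  have hcomap : ∀ w ∈ Z, Ideal.comap (Ideal.Quotient.mk I) (g w) =
      Ideal.span (Set.range fun i => MvPolynomial.X i - MvPolynomial.C (w i)) := by
    intro w hw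
    rw [hg]
    show Ideal.comap (Ideal.Quotient.mk I) (Ideal.map _ _) = _
    rw [Ideal.comap_map_of_surjective _ Ideal.Quotient.mk_surjective]
    have : Ideal.comap (Ideal.Quotient.mk I) ⊥ = I := by
      rw [← RingHom.ker_eq_comap_bot, Ideal.mk_ker]
    rw [this]
    exact sup_eq_left.mpr (hIle w hw)
  have hinj : ∀ w ∈ hfin.toFinset, ∀ w' ∈ hfin.toFinset, g w = g w' → w = w' := by
    intro w hw w' hw' hgw
    have h1 := hcomap w (hfin.mem_toFinset.mp hw)
    have h2 := hcomap w' (hfin.mem_toFinset.mp hw')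
    rw [hgw, h2] at h1
    rw [spanEq w, spanEq w'] at h1
    funext i
    have : MvPolynomial.X i - MvPolynomial.C (w' i) ∈
        MvPolynomial.vanishingIdeal ℂ ({w} : Set (Fin n → ℂ)) := by
      rw [← h1, MvPolynomial.mem_vanishingIdeal_singleton_iff]
      simp
    rw [MvPolynomial.mem_vanishingIdeal_singleton_iff] at this
    change MvPolynomial.eval w _ = 0 at this
    simp only [map_sub, MvPolynomial.eval_X, MvPolynomial.eval_C, sub_eq_zero] at this
    exact this
  have hFq : ∀ (w : Fin n → ℂ) (hw : w ∈ Z), Fq (g w) =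
      Module.finrank ℂ (Localization (@Ideal.primeCompl _ _ (g w) (hprime w hw))) := by
    intro w hw
    unfold Fq
    exact dif_pos (hprime w hw)
  calc Module.finrank ℂ (MvPolynomial (Fin n) ℂ ⧸ I)
      = ∑ J ∈ Finset.image g hfin.toFinset, Fq J := coreLemma _ hmem
    _ = ∑ w ∈ hfin.toFinset, Fq (g w) := Finset.sum_image hinj
    _ = ∑ w ∈ hfin.toFinset.attach, Fq (g w.1) := (Finset.sum_attach _ _).symm
    _ = _ := Finset.sum_congr rfl fun w _ => hFq w.1 (hfin.mem_toFinset.mp w.2)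
end

section
/- Let U ⊆ ℂⁿ be an open set containing Z(p), let complex numbers a_{w,ℓ} be given for each w ∈ Z(p) and each ℓ ∈ ℕⁿ with ℓ ≺ ν_w − 𝟏, not all zero, and let c ∈ ℂ. Then: (i) the ℂ-linear functional Λ, defined on the space of polynomials L ∈ ℂ[s_1,…,s_n] with deg_{s_j} L ≤ d_j − 1 for all j by Λ(L) = Σ_{w ∈ Z(p)} Σ_{ℓ ≺ ν_w − 𝟏} a_{w,ℓ} ∂^ℓ L(w), is nonzero; (ii) a function f analytic on U satisfies Σ_{w ∈ Z(p)} Σ_{ℓ ≺ ν_w − 𝟏} a_{w,ℓ} ∂^ℓ f(w) = c if and only if Λ(L_f) = c, where L_f is the unique polynomial with deg_{s_j} L_f ≤ d_j − 1 for all j such that f − L_f belongs locally to the ideal generated by p_1(s_1),…,p_n(s_n) in H(U); in particular the set of such solutions f is nonempty. -/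
/-- The interpolation functional `g ↦ Σ_{w ∈ Z(p)} Σ_{ℓ ≺ ν_w − 𝟏} a_{w,ℓ} ∂^ℓ g(w)`. -/
noncomputable def interpSum {n : ℕ} (m : Fin n → ℕ) (ξ : ∀ j, Fin (m j) → ℂ)
    (ν : ∀ j, Fin (m j) → ℕ)
    (a : (∀ j, Fin (m j)) → (Fin n → ℕ) → ℂ) (g : (Fin n → ℂ) → ℂ) : ℂ :=
  ∑ κ : ∀ j, Fin (m j), ∑ ℓ : ∀ j, Fin (ν j (κ j)),
    a κ (fun j => (ℓ j : ℕ)) *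
      mixedPartial (fun j => (ℓ j : ℕ)) g (fun j => ξ j (κ j))

/-! ### Auxiliary lemmas -/

open MvPolynomial

section Aux

/-- eval of an MvPolynomial has explicit fderiv given by pderivs. -/
theorem hasFDerivAt_eval {n : ℕ} (P : MvPolynomial (Fin n) ℂ) (x : Fin n → ℂ) :
    HasFDerivAt (fun y => eval y P)
      (∑ i, eval x (pderiv i P) • (ContinuousLinearMap.proj i : (Fin n → ℂ) →L[ℂ] ℂ)) x := by
  induction P using MvPolynomial.induction_on with
  | C a =>
      have heq : (∑ i, eval x (pderiv i (C a : MvPolynomial (Fin n) ℂ)) •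
          (ContinuousLinearMap.proj i : (Fin n → ℂ) →L[ℂ] ℂ)) = 0 := by
        ext v; simp
      have hfun : (fun y : Fin n → ℂ => eval y (C a)) = fun _ => a := by funext y; simp
      rw [hfun, heq]
      exact hasFDerivAt_const (𝕜 := ℂ) a x
  | add P Q hP hQ =>
      have h := hP.add hQ
      have hfun : (fun y : Fin n → ℂ => eval y (P + Q)) = fun y => eval y P + eval y Q := by
        funext y; simp
      have heq : (∑ i, eval x (pderiv i (P + Q)) • (ContinuousLinearMap.proj i : (Fin n → ℂ) →L[ℂ] ℂ))
          = (∑ i, eval x (pderiv i P) • (ContinuousLinearMap.proj i : (Fin n → ℂ) →L[ℂ] ℂ))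
            + (∑ i, eval x (pderiv i Q) • (ContinuousLinearMap.proj i : (Fin n → ℂ) →L[ℂ] ℂ)) := by
        ext v
        simp [Finset.sum_add_distrib, add_mul]
      rw [hfun, heq]
      exact h
  | mul_X P i hP =>
      have hproj : HasFDerivAt (fun y : Fin n → ℂ => y i)
          (ContinuousLinearMap.proj i : (Fin n → ℂ) →L[ℂ] ℂ) x :=
        (ContinuousLinearMap.proj i : (Fin n → ℂ) →L[ℂ] ℂ).hasFDerivAt
      have h := hP.mul hproj
      have hfun : (fun y : Fin n → ℂ => eval y (P * X i)) = fun y => eval y P * y i := by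
        funext y; simp
      have h1 : ∀ k : Fin n, eval x (Pi.single (M := fun _ : Fin n => MvPolynomial (Fin n) ℂ) k 1 i)
          = if k = i then 1 else 0 := by
        intro k
        rcases eq_or_ne k i with rfl | hk
        · simp
        · simp [Pi.single_apply, hk, Ne.symm hk]
      have heq : (∑ k, eval x (pderiv k (P * X i)) • (ContinuousLinearMap.proj k : (Fin n → ℂ) →L[ℂ] ℂ))
          = eval x P • (ContinuousLinearMap.proj i : (Fin n → ℂ) →L[ℂ] ℂ)
            + x i • ∑ k, eval x (pderiv k P) • (ContinuousLinearMap.proj k : (Fin n → ℂ) →L[ℂ] ℂ) := by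
        ext v
        simp only [ContinuousLinearMap.sum_apply, ContinuousLinearMap.smul_apply,
          ContinuousLinearMap.add_apply, ContinuousLinearMap.proj_apply, smul_eq_mul,
          pderiv_mul, pderiv_X, map_add, eval_mul, eval_X, h1, add_mul, ite_mul, one_mul,
          zero_mul, mul_ite, mul_zero]
        have g1 : (∑ k, if k = i then eval x P * 1 * v k else 0) = eval x P * v i := by
          simp
        have g2 : (∑ k, eval x (pderiv k P) * x i * v k)
            = ∑ k, x i * (eval x (pderiv k P) * v k) := by
          refine Finset.sum_congr rfl fun k _ => by ring
        rw [Finset.sum_add_distrib] at *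
        rw [g1, g2, add_comm, Finset.mul_sum]
      rw [hfun, heq]
      exact h

theorem pdOp_analyticAt {n : ℕ} {j : Fin n} {f : (Fin n → ℂ) → ℂ} {x : Fin n → ℂ}
    (hf : AnalyticAt ℂ f x) : AnalyticAt ℂ (pdOp j f) x := by
  have h := ((ContinuousLinearMap.apply ℂ ℂ (Pi.single j 1)).analyticAt
    (fderiv ℂ f x)).comp hf.fderiv
  exact h

theorem pdOp_congr {n : ℕ} {j : Fin n} {f g : (Fin n → ℂ) → ℂ} {x : Fin n → ℂ}
    (h : f =ᶠ[nhds x] g) : pdOp j f =ᶠ[nhds x] pdOp j g := by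
  filter_upwards [Filter.EventuallyEq.fderiv (𝕜 := ℂ) h] with y hy
  simp only [pdOp, hy]

theorem pdOp_add {n : ℕ} {j : Fin n} {f g : (Fin n → ℂ) → ℂ} {x : Fin n → ℂ}
    (hf : AnalyticAt ℂ f x) (hg : AnalyticAt ℂ g x) :
    pdOp j (fun y => f y + g y) =ᶠ[nhds x] fun y => pdOp j f y + pdOp j g y := by
  filter_upwards [hf.eventually_analyticAt, hg.eventually_analyticAt] with y hfy hgy
  simp only [pdOp]
  rw [fderiv_fun_add hfy.differentiableAt hgy.differentiableAt]
  simp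

theorem pdOp_iter_analyticAt {n : ℕ} {j : Fin n} (k : ℕ) {f : (Fin n → ℂ) → ℂ} {x : Fin n → ℂ}
    (hf : AnalyticAt ℂ f x) : AnalyticAt ℂ ((pdOp j)^[k] f) x := by
  induction k generalizing f with
  | zero => exact hf
  | succ k ih => rw [Function.iterate_succ_apply]; exact ih (pdOp_analyticAt hf)

theorem pdOp_iter_congr {n : ℕ} {j : Fin n} (k : ℕ) {f g : (Fin n → ℂ) → ℂ} {x : Fin n → ℂ}
    (h : f =ᶠ[nhds x] g) : (pdOp j)^[k] f =ᶠ[nhds x] (pdOp j)^[k] g := by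
  induction k generalizing f g with
  | zero => exact h
  | succ k ih => rw [Function.iterate_succ_apply, Function.iterate_succ_apply]
                 exact ih (pdOp_congr h)

theorem pdOp_iter_add {n : ℕ} {j : Fin n} (k : ℕ) {f g : (Fin n → ℂ) → ℂ} {x : Fin n → ℂ}
    (hf : AnalyticAt ℂ f x) (hg : AnalyticAt ℂ g x) :
    (pdOp j)^[k] (fun y => f y + g y) =ᶠ[nhds x]
      fun y => (pdOp j)^[k] f y + (pdOp j)^[k] g y := by
  induction k generalizing f g with
  | zero => rfl
  | succ k ih =>
      rw [Function.iterate_succ_apply, Function.iterate_succ_apply, Function.iterate_succ_apply]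
      exact (pdOp_iter_congr k (pdOp_add hf hg)).trans
        (ih (pdOp_analyticAt hf) (pdOp_analyticAt hg))

/-- Auxiliary foldr operator over a list of variable indices. -/
noncomputable def mpList {n : ℕ} (ℓ : Fin n → ℕ) (js : List (Fin n)) (f : (Fin n → ℂ) → ℂ) :
    (Fin n → ℂ) → ℂ :=
  js.foldr (fun j g => (pdOp j)^[ℓ j] g) f

theorem mpList_analyticAt {n : ℕ} {ℓ : Fin n → ℕ} (js : List (Fin n))
    {f : (Fin n → ℂ) → ℂ} {x : Fin n → ℂ}
    (hf : AnalyticAt ℂ f x) : AnalyticAt ℂ (mpList ℓ js f) x := by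
  induction js generalizing f with
  | nil => exact hf
  | cons j js ih => exact pdOp_iter_analyticAt _ (ih hf)

theorem mpList_congr {n : ℕ} {ℓ : Fin n → ℕ} (js : List (Fin n))
    {f g : (Fin n → ℂ) → ℂ} {x : Fin n → ℂ}
    (h : f =ᶠ[nhds x] g) : mpList ℓ js f =ᶠ[nhds x] mpList ℓ js g := by
  induction js generalizing f g with
  | nil => exact h
  | cons j js ih => exact pdOp_iter_congr _ (ih h)

theorem mpList_add {n : ℕ} {ℓ : Fin n → ℕ} (js : List (Fin n))
    {f g : (Fin n → ℂ) → ℂ} {x : Fin n → ℂ}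
    (hf : AnalyticAt ℂ f x) (hg : AnalyticAt ℂ g x) :
    mpList ℓ js (fun y => f y + g y) =ᶠ[nhds x]
      fun y => mpList ℓ js f y + mpList ℓ js g y := by
  induction js generalizing f g with
  | nil => rfl
  | cons j js ih =>
      exact (pdOp_iter_congr _ (ih hf hg)).trans
        (pdOp_iter_add _ (mpList_analyticAt js hf) (mpList_analyticAt js hg))

theorem mixedPartial_add {n : ℕ} {ℓ : Fin n → ℕ} {f g : (Fin n → ℂ) → ℂ} {x : Fin n → ℂ}
    (hf : AnalyticAt ℂ f x) (hg : AnalyticAt ℂ g x) :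
    mixedPartial ℓ (fun y => f y + g y) x = mixedPartial ℓ f x + mixedPartial ℓ g x :=
  (mpList_add (ℓ := ℓ) (List.finRange n) hf hg).self_of_nhds

theorem mixedPartial_congr {n : ℕ} {ℓ : Fin n → ℕ} {f g : (Fin n → ℂ) → ℂ} {x : Fin n → ℂ}
    (h : f =ᶠ[nhds x] g) : mixedPartial ℓ f x = mixedPartial ℓ g x :=
  (mpList_congr (List.finRange n) h).self_of_nhds

theorem analyticAt_evalP {n : ℕ} (P : MvPolynomial (Fin n) ℂ) (x : Fin n → ℂ) :
    AnalyticAt ℂ (fun y => eval y P) x :=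
  AnalyticOnNhd.eval_mvPolynomial P x (Set.mem_univ x)

theorem mixedPartial_zero_fn {n : ℕ} (ℓ : Fin n → ℕ) (x : Fin n → ℂ) :
    mixedPartial ℓ (fun _ => (0 : ℂ)) x = 0 := by
  have hz : pdOp (n := n) = fun j g => pdOp j g := rfl
  have h0 : ∀ j : Fin n, pdOp j (fun _ => (0 : ℂ)) = fun _ => (0 : ℂ) := by
    intro j
    funext y
    simp [pdOp, fderiv_const]
  have hiter : ∀ (j : Fin n) (k : ℕ), (pdOp j)^[k] (fun _ => (0 : ℂ)) = fun _ => (0 : ℂ) := by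
    intro j k
    induction k with
    | zero => rfl
    | succ k ih => rw [Function.iterate_succ_apply, h0, ih]
  have : mixedPartial ℓ (fun _ => (0 : ℂ)) = fun _ => (0 : ℂ) := by
    unfold mixedPartial
    induction (List.finRange n) with
    | nil => rfl
    | cons j js ih => rw [List.foldr_cons, ih, hiter]
  rw [this]

theorem mixedPartial_finsum {n : ℕ} {ℓ : Fin n → ℕ} {ι : Type*} (s : Finset ι)
    (F : ι → (Fin n → ℂ) → ℂ) {x : Fin n → ℂ}
    (hF : ∀ i ∈ s, AnalyticAt ℂ (F i) x) :
    mixedPartial ℓ (fun y => ∑ i ∈ s, F i y) x = ∑ i ∈ s, mixedPartial ℓ (F i) x := by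
  classical
  induction s using Finset.induction_on with
  | empty => simpa using mixedPartial_zero_fn ℓ x
  | insert i s' hxs ih =>
      have h1 : (fun y => ∑ k ∈ insert i s', F k y)
          = fun y => F i y + ∑ k ∈ s', F k y := by
        funext y; rw [Finset.sum_insert hxs]
      rw [h1, mixedPartial_add (hF i (Finset.mem_insert_self i s'))
        (Finset.analyticAt_fun_sum s' fun k hk => hF k (Finset.mem_insert_of_mem hk)),
        Finset.sum_insert hxs, ih (fun k hk => hF k (Finset.mem_insert_of_mem hk))]

theorem pdOp_eval {n : ℕ} (j : Fin n) (P : MvPolynomial (Fin n) ℂ) :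
    pdOp j (fun y => eval y P) = fun y => eval y (pderiv j P) := by
  funext x
  have h := (hasFDerivAt_eval P x).fderiv
  simp only [pdOp, h]
  simp only [ContinuousLinearMap.sum_apply, ContinuousLinearMap.smul_apply,
    ContinuousLinearMap.proj_apply, smul_eq_mul]
  rw [Finset.sum_eq_single j]
  · simp
  · intro b _ hb; simp [Pi.single_apply, hb]
  · simp

theorem pdOp_iter_eval {n : ℕ} (j : Fin n) (k : ℕ) (P : MvPolynomial (Fin n) ℂ) :
    (pdOp j)^[k] (fun y => eval y P) = fun y => eval y ((pderiv j)^[k] P) := by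
  induction k generalizing P with
  | zero => rfl
  | succ k ih =>
      rw [Function.iterate_succ_apply, pdOp_eval, ih, Function.iterate_succ_apply]

/-- mixed pderiv operator on polynomials -/
noncomputable def mpderiv {n : ℕ} (ℓ : Fin n → ℕ) (P : MvPolynomial (Fin n) ℂ) :
    MvPolynomial (Fin n) ℂ :=
  (List.finRange n).foldr (fun j Q => (pderiv j)^[ℓ j] Q) P

theorem mixedPartial_eval {n : ℕ} (ℓ : Fin n → ℕ) (P : MvPolynomial (Fin n) ℂ) :
    mixedPartial ℓ (fun y => eval y P) = fun y => eval y (mpderiv ℓ P) := by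
  unfold mixedPartial mpderiv
  induction (List.finRange n) with
  | nil => rfl
  | cons j js ih => rw [List.foldr_cons, List.foldr_cons, ih, pdOp_iter_eval]

theorem mpderiv_C_mul {n : ℕ} (ℓ : Fin n → ℕ) (t : ℂ) (P : MvPolynomial (Fin n) ℂ) :
    mpderiv ℓ (C t * P) = C t * mpderiv ℓ P := by
  have hiter : ∀ (j : Fin n) (k : ℕ) (Q : MvPolynomial (Fin n) ℂ),
      (pderiv j)^[k] (C t * Q) = C t * (pderiv j)^[k] Q := by
    intro j k
    induction k with
    | zero => intro Q; rfl
    | succ k ih =>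
        intro Q
        rw [Function.iterate_succ_apply, pderiv_C_mul, ih, Function.iterate_succ_apply]
  unfold mpderiv
  induction (List.finRange n) with
  | nil => rfl
  | cons j js ih => rw [List.foldr_cons, List.foldr_cons, ih, hiter]

/-! ### PowForm machinery for the vanishing lemma -/

/-- `g` has the form `(s j - c)^t * h` with `h` analytic on `V`. -/
def PowForm {n : ℕ} (V : Set (Fin n → ℂ)) (j : Fin n) (c : ℂ) (t : ℕ)
    (g : (Fin n → ℂ) → ℂ) : Prop :=
  ∃ h : (Fin n → ℂ) → ℂ, AnalyticOnNhd ℂ h V ∧ ∀ s ∈ V, g s = (s j - c) ^ t * h s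

theorem hasFDerivAt_pow_coord {n : ℕ} (j : Fin n) (c : ℂ) (t : ℕ) (s : Fin n → ℂ) :
    HasFDerivAt (fun y : Fin n → ℂ => (y j - c) ^ t)
      ((t * (s j - c) ^ (t - 1)) • (ContinuousLinearMap.proj j : (Fin n → ℂ) →L[ℂ] ℂ)) s := by
  have hq : HasDerivAt (fun z : ℂ => (z - c) ^ t) (t * (s j - c) ^ (t - 1)) (s j) := by
    have := ((hasDerivAt_id (s j)).sub_const c).fun_pow t
    simpa using this
  have hproj : HasFDerivAt (fun y : Fin n → ℂ => y j)
      (ContinuousLinearMap.proj j : (Fin n → ℂ) →L[ℂ] ℂ) s :=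
    (ContinuousLinearMap.proj j : (Fin n → ℂ) →L[ℂ] ℂ).hasFDerivAt
  have := hq.comp_hasFDerivAt s hproj
  exact this

theorem powForm_pdOp {n : ℕ} {V : Set (Fin n → ℂ)} (hV : IsOpen V) {j i : Fin n} {c : ℂ}
    {t : ℕ} {g : (Fin n → ℂ) → ℂ} (hg : PowForm V j c t g) :
    PowForm V j c (if i = j then t - 1 else t) (pdOp i g) := by
  obtain ⟨h, hh, heq⟩ := hg
  set F : (Fin n → ℂ) → ℂ := fun s => (s j - c) ^ t * h s with hF
  have hcong : ∀ s ∈ V, pdOp i g s = pdOp i F s := by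
    intro s hs
    have : g =ᶠ[nhds s] F :=
      Filter.eventuallyEq_iff_exists_mem.2 ⟨V, hV.mem_nhds hs, fun y hy => heq y hy⟩
    simp only [pdOp]
    rw [Filter.EventuallyEq.fderiv_eq this]
  have hder : ∀ s ∈ V, pdOp i F s
      = (s j - c) ^ t * pdOp i h s
        + h s * ((t * (s j - c) ^ (t - 1)) * (if i = j then 1 else 0)) := by
    intro s hs
    have hu := hasFDerivAt_pow_coord j c t s
    have hhs : HasFDerivAt h (fderiv ℂ h s) s := ((hh s hs).differentiableAt).hasFDerivAt
    have := (hu.fun_mul hhs).fderiv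
    simp only [pdOp, hF]
    rw [this]
    simp only [ContinuousLinearMap.add_apply, ContinuousLinearMap.smul_apply,
      ContinuousLinearMap.proj_apply, smul_eq_mul]
    rcases eq_or_ne i j with rfl | hij
    · simp [mul_comm]
    · simp [Pi.single_apply, hij, mul_comm]
  by_cases hij : i = j
  · subst hij
    rcases Nat.eq_zero_or_pos t with rfl | ht
    · refine ⟨pdOp i h, fun s hs => ?_, fun s hs => ?_⟩
      · exact pdOp_analyticAt (hh s hs)
      · rw [hcong s hs, hder s hs]; simp
    · refine ⟨fun s => (s i - c) * pdOp i h s + (t : ℂ) * h s, fun s hs => ?_, fun s hs => ?_⟩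
      · have h1 : AnalyticOnNhd ℂ (pdOp i h) V := fun y hy => pdOp_analyticAt (hh y hy)
        have h2 : AnalyticAt ℂ (fun y : Fin n → ℂ => y i - c) s :=
          (((ContinuousLinearMap.proj i : (Fin n → ℂ) →L[ℂ] ℂ).analyticAt s).sub
            analyticAt_const)
        exact (h2.mul (h1 s hs)).add (analyticAt_const.mul (hh s hs))
      · rw [hcong s hs, hder s hs]
        have hts : (s i - c) ^ t = (s i - c) ^ (t - 1) * (s i - c) := by
          conv_lhs => rw [← Nat.sub_add_cancel ht]
          rw [pow_succ]
        simp only [eq_self_iff_true, if_true]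
        rw [hts]
        ring
  · rw [if_neg hij]
    refine ⟨pdOp i h, fun s hs => ?_, fun s hs => ?_⟩
    · exact pdOp_analyticAt (hh s hs)
    · rw [hcong s hs, hder s hs]; simp [hij]

theorem powForm_pdOp_iter_ne {n : ℕ} {V : Set (Fin n → ℂ)} (hV : IsOpen V) {j i : Fin n}
    (hij : i ≠ j) {c : ℂ} {t : ℕ} {g : (Fin n → ℂ) → ℂ} (k : ℕ)
    (hg : PowForm V j c t g) : PowForm V j c t ((pdOp i)^[k] g) := by
  induction k generalizing g with
  | zero => exact hg
  | succ k ih =>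
      rw [Function.iterate_succ_apply]
      refine ih ?_
      have := powForm_pdOp (i := i) hV hg
      rwa [if_neg hij] at this

theorem powForm_pdOp_iter_self {n : ℕ} {V : Set (Fin n → ℂ)} (hV : IsOpen V) {j : Fin n}
    {c : ℂ} {t : ℕ} {g : (Fin n → ℂ) → ℂ} (k : ℕ)
    (hg : PowForm V j c (t + k) g) : PowForm V j c t ((pdOp j)^[k] g) := by
  induction k generalizing g with
  | zero => exact hg
  | succ k ih =>
      rw [Function.iterate_succ_apply]
      refine ih ?_
      have := powForm_pdOp (i := j) hV hg
      rw [if_pos rfl] at this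
      have he : t + (k + 1) - 1 = t + k := by omega
      rwa [he] at this

theorem powForm_mpList_notmem {n : ℕ} {V : Set (Fin n → ℂ)} (hV : IsOpen V) {ℓ : Fin n → ℕ}
    {j : Fin n} {c : ℂ} (js : List (Fin n)) (hj : j ∉ js) {t : ℕ} {g : (Fin n → ℂ) → ℂ}
    (hg : PowForm V j c t g) : PowForm V j c t (mpList ℓ js g) := by
  induction js generalizing g with
  | nil => exact hg
  | cons i js ih =>
      have hij : i ≠ j := fun h => hj (h ▸ List.mem_cons_self (a := i) (l := js))
      have hj' : j ∉ js := fun h => hj (List.mem_cons_of_mem _ h)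
      exact powForm_pdOp_iter_ne hV hij _ (ih hj' hg)

theorem powForm_mpList_mem {n : ℕ} {V : Set (Fin n → ℂ)} (hV : IsOpen V) {ℓ : Fin n → ℕ}
    {j : Fin n} {c : ℂ} (js : List (Fin n)) (hnd : js.Nodup) (hj : j ∈ js)
    {t : ℕ} {g : (Fin n → ℂ) → ℂ}
    (hg : PowForm V j c (t + ℓ j) g) : PowForm V j c t (mpList ℓ js g) := by
  induction js generalizing g t with
  | nil => simp at hj
  | cons i js ih =>
      rcases List.mem_cons.1 hj with rfl | hj'
      · have hjn : j ∉ js := (List.nodup_cons.1 hnd).1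
        exact powForm_pdOp_iter_self hV _ (powForm_mpList_notmem hV js hjn hg)
      · have hij : i ≠ j := by
          rintro rfl
          exact (List.nodup_cons.1 hnd).1 hj'
        exact powForm_pdOp_iter_ne hV hij _ (ih (List.nodup_cons.1 hnd).2 hj' hg)

theorem mixedPartial_vanish {n : ℕ} {V : Set (Fin n → ℂ)} (hV : IsOpen V) {j : Fin n}
    {ℓ : Fin n → ℕ} {ν : ℕ} {g : (Fin n → ℂ) → ℂ} {w : Fin n → ℂ} (hw : w ∈ V)
    (hg : PowForm V j (w j) ν g) (hℓ : ℓ j < ν) :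
    mixedPartial ℓ g w = 0 := by
  have hform : PowForm V j (w j) (ν - ℓ j) (mpList ℓ (List.finRange n) g) := by
    refine powForm_mpList_mem hV _ (List.nodup_finRange n) (List.mem_finRange j) ?_
    have : ν - ℓ j + ℓ j = ν := by omega
    rwa [this]
  obtain ⟨h, hh, heq⟩ := hform
  have : mixedPartial ℓ g w = (w j - w j) ^ (ν - ℓ j) * h w := heq w hw
  rw [this, sub_self, zero_pow (by omega), zero_mul]

/-! ### Single-variable embedding and polynomial computations -/

/-- Embed a single-variable polynomial as an `MvPolynomial` in variable `j`. -/
noncomputable def emb {n : ℕ} (j : Fin n) (q : Polynomial ℂ) : MvPolynomial (Fin n) ℂ :=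
  Polynomial.aeval (X j) q

theorem eval_emb {n : ℕ} (j : Fin n) (q : Polynomial ℂ) (x : Fin n → ℂ) :
    eval x (emb j q) = Polynomial.eval (x j) q := by
  unfold emb
  rw [show (eval x : MvPolynomial (Fin n) ℂ → ℂ) (Polynomial.aeval (X j) q)
      = aeval x (Polynomial.aeval (X j) q) from rfl]
  rw [← Polynomial.aeval_algHom_apply]
  simp only [MvPolynomial.aeval_X, Polynomial.coe_aeval_eq_eval]

theorem pderiv_emb_self {n : ℕ} (j : Fin n) (q : Polynomial ℂ) :
    pderiv j (emb j q) = emb j (Polynomial.derivative q) := by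
  unfold emb
  induction q using Polynomial.induction_on with
  | C a => simp
  | add p r hp hr => simp [hp, hr]
  | monomial k a h =>
      simp only [map_mul, Polynomial.aeval_C, Polynomial.aeval_X_pow, pderiv_mul, pderiv_C,
        zero_mul, Polynomial.derivative_C_mul, Polynomial.derivative_X_pow, map_nsmul] at *
      have hd : (pderiv j) ((algebraMap ℂ (MvPolynomial (Fin n) ℂ)) a) = 0 := by
        simp [algebraMap_eq]
      rw [hd, zero_mul, zero_add]
      rw [pderiv_pow, pderiv_X, Pi.single_eq_same]
      push_cast
      ring

theorem pderiv_emb_ne {n : ℕ} {i j : Fin n} (hij : i ≠ j) (q : Polynomial ℂ) :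
    pderiv i (emb j q) = 0 := by
  unfold emb
  induction q using Polynomial.induction_on with
  | C a => simp
  | add p r hp hr => simp [hp, hr]
  | monomial k a h =>
      simp only [map_mul, Polynomial.aeval_C, Polynomial.aeval_X_pow, pderiv_mul] at *
      have hd : (pderiv i) ((algebraMap ℂ (MvPolynomial (Fin n) ℂ)) a) = 0 := by
        simp [algebraMap_eq]
      rw [hd, zero_mul, zero_add] at *
      rw [pderiv_pow, pderiv_X, Pi.single_apply, if_neg (Ne.symm hij)]
      simp

theorem pderiv_iter_emb_self {n : ℕ} (j : Fin n) (k : ℕ) (q : Polynomial ℂ) :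
    (pderiv j)^[k] (emb j q) = emb j ((⇑Polynomial.derivative)^[k] q) := by
  induction k generalizing q with
  | zero => rfl
  | succ k ih =>
      rw [Function.iterate_succ_apply, pderiv_emb_self, ih, Function.iterate_succ_apply]

theorem pderiv_prod_emb_zero {n : ℕ} {i : Fin n} (s : Finset (Fin n)) (his : i ∉ s)
    (r : Fin n → Polynomial ℂ) :
    pderiv i (∏ j ∈ s, emb j (r j)) = 0 := by
  induction s using Finset.induction_on with
  | empty => simp
  | insert x s' hxs ih =>
      rw [Finset.prod_insert hxs, pderiv_mul, ih (fun h => his (Finset.mem_insert_of_mem h)),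
        pderiv_emb_ne (fun h : i = x => his (h ▸ Finset.mem_insert_self x s')) , zero_mul,
        mul_zero, add_zero]

theorem pderiv_iter_mul_right {n : ℕ} {i : Fin n} (k : ℕ) (A B : MvPolynomial (Fin n) ℂ)
    (hB : pderiv i B = 0) :
    (pderiv i)^[k] (A * B) = ((pderiv i)^[k] A) * B := by
  induction k generalizing A with
  | zero => rfl
  | succ k ih =>
      rw [Function.iterate_succ_apply, pderiv_mul, hB, mul_zero, add_zero, ih,
        Function.iterate_succ_apply]

theorem mpderiv_list_prod_emb {n : ℕ} (ℓ : Fin n → ℕ) (js : List (Fin n)) (hnd : js.Nodup)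
    (q : Fin n → Polynomial ℂ) :
    js.foldr (fun j Q => (pderiv j)^[ℓ j] Q) (∏ j, emb j (q j))
      = ∏ j, emb j (if j ∈ js then (⇑Polynomial.derivative)^[ℓ j] (q j) else q j) := by
  induction js with
  | nil => simp
  | cons i js ih =>
      have hnd' := (List.nodup_cons.1 hnd).2
      have hin : i ∉ js := (List.nodup_cons.1 hnd).1
      rw [List.foldr_cons, ih hnd']
      set r : Fin n → Polynomial ℂ :=
        fun j => if j ∈ js then (⇑Polynomial.derivative)^[ℓ j] (q j) else q j with hr
      have hsplit : (∏ j, emb j (r j))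
          = emb i (r i) * ∏ j ∈ Finset.univ.erase i, emb j (r j) :=
        (Finset.mul_prod_erase Finset.univ _ (Finset.mem_univ i)).symm
      rw [hsplit, pderiv_iter_mul_right _ _ _
        (pderiv_prod_emb_zero _ (Finset.notMem_erase i _) r),
        pderiv_iter_emb_self]
      have hri : r i = q i := by rw [hr]; simp [hin]
      rw [hri]
      have hfinal : (∏ j, emb j (if j ∈ i :: js then (⇑Polynomial.derivative)^[ℓ j] (q j) else q j))
          = emb i ((⇑Polynomial.derivative)^[ℓ i] (q i))
            * ∏ j ∈ Finset.univ.erase i, emb j (r j) := by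
        rw [← Finset.mul_prod_erase Finset.univ _ (Finset.mem_univ i)]
        congr 1
        · simp
        · refine Finset.prod_congr rfl fun j hj => ?_
          have hji : j ≠ i := (Finset.mem_erase.1 hj).1
          rw [hr]
          simp [List.mem_cons, hji]
      rw [hfinal]

theorem mpderiv_prod_emb {n : ℕ} (ℓ : Fin n → ℕ) (q : Fin n → Polynomial ℂ) :
    mpderiv ℓ (∏ j, emb j (q j)) = ∏ j, emb j ((⇑Polynomial.derivative)^[ℓ j] (q j)) := by
  unfold mpderiv
  rw [mpderiv_list_prod_emb ℓ _ (List.nodup_finRange n) q]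
  refine Finset.prod_congr rfl fun j _ => ?_
  rw [if_pos (List.mem_finRange j)]

theorem eval_prod_emb {n : ℕ} (q : Fin n → Polynomial ℂ) (x : Fin n → ℂ) :
    eval x (∏ j, emb j (q j)) = ∏ j, Polynomial.eval (x j) (q j) := by
  rw [map_prod]
  exact Finset.prod_congr rfl fun j _ => eval_emb j (q j) x

theorem degreeOf_emb_le {n : ℕ} (i j : Fin n) (q : Polynomial ℂ) :
    degreeOf i (emb j q) ≤ if i = j then q.natDegree else 0 := by
  unfold emb
  rw [Polynomial.aeval_def, Polynomial.eval₂_eq_sum, Polynomial.sum]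
  refine le_trans (degreeOf_sum_le _ _ _) ?_
  rw [Finset.sup_le_iff]
  intro e he
  have h1 : degreeOf i (algebraMap ℂ (MvPolynomial (Fin n) ℂ) (q.coeff e) * X j ^ e)
      ≤ degreeOf i ((X j : MvPolynomial (Fin n) ℂ) ^ e) := by
    have := degreeOf_C_mul_le ((X j : MvPolynomial (Fin n) ℂ) ^ e) i (q.coeff e)
    simpa [algebraMap_eq] using this
  refine le_trans h1 ?_
  refine le_trans (degreeOf_pow_le i _ e) ?_
  rw [degreeOf_X]
  rcases eq_or_ne i j with rfl | hij
  · simpa using Polynomial.le_natDegree_of_mem_supp e he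
  · simp [hij]

theorem degreeOf_prod_emb_le {n : ℕ} (i : Fin n) (q : Fin n → Polynomial ℂ) :
    degreeOf i (∏ j, emb j (q j)) ≤ (q i).natDegree := by
  refine le_trans (degreeOf_prod_le i _ _) ?_
  have : ∀ j, degreeOf i (emb j (q j)) ≤ if i = j then (q j).natDegree else 0 :=
    fun j => degreeOf_emb_le i j (q j)
  refine le_trans (Finset.sum_le_sum fun j _ => this j) ?_
  rw [Finset.sum_ite_eq Finset.univ i (fun j => (q j).natDegree)]
  simp

theorem eval_iter_deriv_zero {q : Polynomial ℂ} {x : ℂ} {ν k : ℕ} (hq : q ≠ 0)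
    (hdvd : (Polynomial.X - Polynomial.C x) ^ ν ∣ q) (hk : k < ν) :
    (Polynomial.derivative^[k] q).eval x = 0 := by
  have hmult : ν ≤ q.rootMultiplicity x := (Polynomial.le_rootMultiplicity_iff hq).2 hdvd
  exact Polynomial.isRoot_iterate_derivative_of_lt_rootMultiplicity (lt_of_lt_of_le hk hmult)

theorem eval_iter_deriv_pow_mul (g : Polynomial ℂ) (x : ℂ) (k : ℕ) :
    (Polynomial.derivative^[k] ((Polynomial.X - Polynomial.C x) ^ k * g)).eval x = (k.factorial : ℂ) * g.eval x := by
  have h1 : Polynomial.derivative^[k] ((Polynomial.X - Polynomial.C x) ^ k * g)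
      = k.factorial • Polynomial.hasseDeriv k ((Polynomial.X - Polynomial.C x) ^ k * g) := by
    rw [← Polynomial.factorial_smul_hasseDeriv]
    rfl
  rw [h1, Polynomial.eval_smul, ← Polynomial.taylor_coeff]
  have hXC : Polynomial.taylor x (Polynomial.X - Polynomial.C x) = Polynomial.X := by
    rw [Polynomial.taylor_apply, Polynomial.sub_comp, Polynomial.X_comp, Polynomial.C_comp]
    ring
  have hpow : ∀ t : ℕ, Polynomial.taylor x ((Polynomial.X - Polynomial.C x) ^ t) = Polynomial.X ^ t := by
    intro t
    induction t with
    | zero => simpa using Polynomial.taylor_one x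
    | succ t ih => rw [pow_succ, Polynomial.taylor_mul, ih, hXC, pow_succ]
  have h2 : Polynomial.taylor x ((Polynomial.X - Polynomial.C x) ^ k * g) = Polynomial.X ^ k * Polynomial.taylor x g := by
    rw [Polynomial.taylor_mul, hpow]
  rw [h2]
  have h3 : (Polynomial.X ^ k * Polynomial.taylor x g).coeff k = (Polynomial.taylor x g).coeff 0 := by
    have := Polynomial.coeff_X_pow_mul (Polynomial.taylor x g) k 0
    simpa using this
  rw [h3, Polynomial.taylor_coeff_zero]
  simp [nsmul_eq_mul]

end Aux

theorem stmt15 {n : ℕ} (m : Fin n → ℕ) (hm : ∀ j, 0 < m j)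
    (ξ : ∀ j, Fin (m j) → ℂ) (hξ : ∀ j, Function.Injective (ξ j))
    (ν : ∀ j, Fin (m j) → ℕ) (hν : ∀ j κ, 1 ≤ ν j κ)
    (p : Fin n → MvPolynomial (Fin n) ℂ)
    (hp : ∀ j, p j = ∏ κ : Fin (m j),
      (MvPolynomial.X j - MvPolynomial.C (ξ j κ)) ^ ν j κ)
    (d : Fin n → ℕ) (hd : ∀ j, d j = ∑ κ : Fin (m j), ν j κ)
    (U : Set (Fin n → ℂ)) (hU : IsOpen U)
    (hZU : ∀ κ : ∀ j, Fin (m j), (fun j => ξ j (κ j)) ∈ U)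
    (a : (∀ j, Fin (m j)) → (Fin n → ℕ) → ℂ)
    (ha : ∃ κ : ∀ j, Fin (m j), ∃ ℓ : Fin n → ℕ,
      (∀ j, ℓ j < ν j (κ j)) ∧ a κ ℓ ≠ 0)
    (c : ℂ) :
    (∃ L : MvPolynomial (Fin n) ℂ,
        (∀ j, MvPolynomial.degreeOf j L ≤ d j - 1) ∧
        interpSum m ξ ν a (fun s => MvPolynomial.eval s L) ≠ 0) ∧
    (∀ f : (Fin n → ℂ) → ℂ, AnalyticOnNhd ℂ f U →
      ∀ L : MvPolynomial (Fin n) ℂ,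
        (∀ j, MvPolynomial.degreeOf j L ≤ d j - 1) →
        MemLocalIdeal U p (fun s => f s - MvPolynomial.eval s L) →
        (interpSum m ξ ν a f = c ↔
          interpSum m ξ ν a (fun s => MvPolynomial.eval s L) = c)) ∧
    (∃ f : (Fin n → ℂ) → ℂ, AnalyticOnNhd ℂ f U ∧ interpSum m ξ ν a f = c) := by
  classical
  -- Part (i)
  have hPart1 : ∃ L : MvPolynomial (Fin n) ℂ,
      (∀ j, MvPolynomial.degreeOf j L ≤ d j - 1) ∧
      interpSum m ξ ν a (fun s => MvPolynomial.eval s L) ≠ 0 := by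
    obtain ⟨κ₀, ℓa, hℓa, ha0⟩ := ha
    set SS : Set (∀ j, Fin (ν j (κ₀ j))) := {ℓ | a κ₀ (fun j => (ℓ j : ℕ)) ≠ 0} with hSS
    have hSne : SS.Nonempty := ⟨fun j => ⟨ℓa j, hℓa j⟩, ha0⟩
    obtain ⟨ℓ₀, hℓ₀S, hmax⟩ := Set.Finite.exists_maximalFor id SS (Set.toFinite SS) hSne
    set qp : ∀ j : Fin n, Polynomial ℂ := fun j =>
      (Polynomial.X - Polynomial.C (ξ j (κ₀ j))) ^ (ℓ₀ j : ℕ)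
        * ∏ κ ∈ Finset.univ.erase (κ₀ j), (Polynomial.X - Polynomial.C (ξ j κ)) ^ (ν j κ)
      with hqp
    have hqm : ∀ j, (qp j).Monic := fun j =>
      ((Polynomial.monic_X_sub_C _).pow _).mul
        (Polynomial.monic_prod_of_monic _ _ fun κ _ => (Polynomial.monic_X_sub_C _).pow _)
    set L : MvPolynomial (Fin n) ℂ := ∏ j, emb j (qp j) with hL
    have hdegq : ∀ j, (qp j).natDegree
        = (ℓ₀ j : ℕ) + ∑ κ ∈ Finset.univ.erase (κ₀ j), ν j κ := by
      intro j
      rw [hqp]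
      rw [Polynomial.Monic.natDegree_mul ((Polynomial.monic_X_sub_C _).pow _)
        (Polynomial.monic_prod_of_monic _ _ fun κ _ => (Polynomial.monic_X_sub_C _).pow _)]
      rw [Polynomial.natDegree_pow, Polynomial.natDegree_X_sub_C, mul_one]
      rw [Polynomial.natDegree_prod _ _
        (fun κ _ => ((Polynomial.monic_X_sub_C _).pow _).ne_zero)]
      congr 1
      refine Finset.sum_congr rfl fun κ _ => ?_
      rw [Polynomial.natDegree_pow, Polynomial.natDegree_X_sub_C, mul_one]
    have hdeg : ∀ j, MvPolynomial.degreeOf j L ≤ d j - 1 := by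
      intro j
      refine le_trans (degreeOf_prod_emb_le j qp) ?_
      rw [hdegq j]
      have hsum : d j = ν j (κ₀ j) + ∑ κ ∈ Finset.univ.erase (κ₀ j), ν j κ := by
        rw [hd j, Finset.add_sum_erase _ _ (Finset.mem_univ (κ₀ j))]
      have hlt : (ℓ₀ j : ℕ) < ν j (κ₀ j) := (ℓ₀ j).isLt
      omega
    -- evaluation of mixed partials of L
    have hps : ∀ (ℓ : Fin n → ℕ) (y : Fin n → ℂ),
        mixedPartial ℓ (fun s => MvPolynomial.eval s L) y
          = ∏ j, (Polynomial.derivative^[ℓ j] (qp j)).eval (y j) := by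
      intro ℓ y
      have h1 := congrFun (mixedPartial_eval ℓ L) y
      rw [h1, hL, mpderiv_prod_emb, eval_prod_emb]
    -- off-diagonal κ vanishing
    have hzoff : ∀ κ : ∀ j, Fin (m j), κ ≠ κ₀ → ∀ ℓ : ∀ j, Fin (ν j (κ j)),
        (∏ j, (Polynomial.derivative^[(ℓ j : ℕ)] (qp j)).eval (ξ j (κ j))) = 0 := by
      intro κ hκ ℓ
      obtain ⟨j, hj⟩ := Function.ne_iff.1 hκ
      refine Finset.prod_eq_zero (Finset.mem_univ j) ?_
      refine eval_iter_deriv_zero (hqm j).ne_zero ?_ (ℓ j).isLt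
      refine Dvd.dvd.mul_left ?_ _
      exact Finset.dvd_prod_of_mem _ (Finset.mem_erase.2 ⟨hj, Finset.mem_univ _⟩)
    -- diagonal low-order vanishing
    have hzlow : ∀ ℓ : ∀ j, Fin (ν j (κ₀ j)), (∃ j, (ℓ j : ℕ) < (ℓ₀ j : ℕ)) →
        (∏ j, (Polynomial.derivative^[(ℓ j : ℕ)] (qp j)).eval (ξ j (κ₀ j))) = 0 := by
      intro ℓ ⟨j, hj⟩
      refine Finset.prod_eq_zero (Finset.mem_univ j) ?_
      refine eval_iter_deriv_zero (hqm j).ne_zero ?_ hj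
      exact dvd_mul_right _ _
    -- value at ℓ₀
    have hval : (∏ j, (Polynomial.derivative^[(ℓ₀ j : ℕ)] (qp j)).eval (ξ j (κ₀ j))) ≠ 0 := by
      rw [show (∏ j, (Polynomial.derivative^[(ℓ₀ j : ℕ)] (qp j)).eval (ξ j (κ₀ j)))
          = ∏ j, (((ℓ₀ j : ℕ).factorial : ℂ) *
              (∏ κ ∈ Finset.univ.erase (κ₀ j),
                (ξ j (κ₀ j) - ξ j κ) ^ (ν j κ))) from ?_]
      · rw [Finset.prod_ne_zero_iff]
        intro j _
        refine mul_ne_zero (Nat.cast_ne_zero.2 (Nat.factorial_ne_zero _)) ?_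
        rw [Finset.prod_ne_zero_iff]
        intro κ hκ
        refine pow_ne_zero _ (sub_ne_zero.2 fun h => ?_)
        exact (Finset.mem_erase.1 hκ).1.symm (hξ j h)
      · refine Finset.prod_congr rfl fun j _ => ?_
        rw [hqp]
        rw [eval_iter_deriv_pow_mul]
        congr 1
        rw [Polynomial.eval_prod]
        refine Finset.prod_congr rfl fun κ _ => ?_
        simp
    refine ⟨L, hdeg, ?_⟩
    unfold interpSum
    simp only [hps]
    rw [Finset.sum_eq_single κ₀]
    · rw [Finset.sum_eq_single ℓ₀]
      · exact mul_ne_zero hℓ₀S hval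
      · intro ℓ _ hℓ
        by_cases hcase : ∀ j, (ℓ₀ j : ℕ) ≤ (ℓ j : ℕ)
        · have h0 : a κ₀ (fun j => (ℓ j : ℕ)) = 0 := by
            by_contra h0
            have hle : id ℓ₀ ≤ id ℓ := fun j => Fin.mk_le_mk.2 (hcase j)
            exact hℓ (le_antisymm (hmax h0 hle) hle)
          rw [h0, zero_mul]
        · push_neg at hcase
          obtain ⟨j, hj⟩ := hcase
          rw [hzlow ℓ ⟨j, hj⟩, mul_zero]
      · intro h
        exact absurd (Finset.mem_univ ℓ₀) h
    · intro κ _ hκ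
      refine Finset.sum_eq_zero fun ℓ _ => ?_
      rw [hzoff κ hκ ℓ, mul_zero]
    · intro h
      exact absurd (Finset.mem_univ κ₀) h
  -- Part (ii)
  have hPart2 : ∀ f : (Fin n → ℂ) → ℂ, AnalyticOnNhd ℂ f U →
      ∀ L : MvPolynomial (Fin n) ℂ,
        (∀ j, MvPolynomial.degreeOf j L ≤ d j - 1) →
        MemLocalIdeal U p (fun s => f s - MvPolynomial.eval s L) →
        interpSum m ξ ν a f = interpSum m ξ ν a (fun s => MvPolynomial.eval s L) := by
    intro f hf L _ hmem
    unfold interpSum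
    refine Finset.sum_congr rfl fun κ _ => Finset.sum_congr rfl fun ℓ _ => ?_
    congr 1
    set w : Fin n → ℂ := fun j => ξ j (κ j) with hw
    have hwU : w ∈ U := hZU κ
    obtain ⟨V, hVo, hVU, hwV, q, hq, heq⟩ := hmem w hwU
    set ℓ' : Fin n → ℕ := fun j => (ℓ j : ℕ) with hℓ'
    have hfa : AnalyticAt ℂ f w := hf w hwU
    have hLa : AnalyticAt ℂ (fun s => MvPolynomial.eval s L) w := analyticAt_evalP L w
    have hsub : AnalyticAt ℂ (fun s => f s - MvPolynomial.eval s L) w := hfa.sub hLa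
    have hsplit : mixedPartial ℓ' f w
        = mixedPartial ℓ' (fun s => f s - MvPolynomial.eval s L) w
          + mixedPartial ℓ' (fun s => MvPolynomial.eval s L) w := by
      have h := mixedPartial_add (ℓ := ℓ') (x := w) hsub hLa
      have hfe : (fun y => (f y - MvPolynomial.eval y L) + MvPolynomial.eval y L) = f := by
        funext y; ring
      rw [hfe] at h
      exact h
    have hvan : mixedPartial ℓ' (fun s => f s - MvPolynomial.eval s L) w = 0 := by
      have hcong : mixedPartial ℓ' (fun s => f s - MvPolynomial.eval s L) w
          = mixedPartial ℓ' (fun s => ∑ j, q j s * MvPolynomial.eval s (p j)) w :=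
        mixedPartial_congr (Filter.eventuallyEq_iff_exists_mem.2
          ⟨V, hVo.mem_nhds hwV, fun y hy => heq y hy⟩)
      rw [hcong]
      have hterm : ∀ j : Fin n, AnalyticAt ℂ (fun s => q j s * MvPolynomial.eval s (p j)) w :=
        fun j => (hq j w hwV).mul (analyticAt_evalP (p j) w)
      rw [mixedPartial_finsum Finset.univ _ (fun j _ => hterm j)]
      refine Finset.sum_eq_zero fun j _ => ?_
      set rest : MvPolynomial (Fin n) ℂ :=
        ∏ κ' ∈ Finset.univ.erase (κ j),
          (MvPolynomial.X j - MvPolynomial.C (ξ j κ')) ^ (ν j κ') with hrest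
      have hPF : PowForm V j (w j) (ν j (κ j)) (fun s => q j s * MvPolynomial.eval s (p j)) := by
        refine ⟨fun s => q j s * MvPolynomial.eval s rest,
          fun y hy => (hq j y hy).mul (analyticAt_evalP rest y), fun s hs => ?_⟩
        have hsplitp : p j = (MvPolynomial.X j - MvPolynomial.C (ξ j (κ j))) ^ (ν j (κ j))
            * rest := by
          rw [hp j, hrest, ← Finset.mul_prod_erase Finset.univ _ (Finset.mem_univ (κ j))]
        have hev : MvPolynomial.eval s (p j)
            = (s j - ξ j (κ j)) ^ (ν j (κ j)) * MvPolynomial.eval s rest := by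
          rw [hsplitp, map_mul]
          congr 1
          simp
        show q j s * MvPolynomial.eval s (p j)
          = (s j - w j) ^ ν j (κ j) * (q j s * MvPolynomial.eval s rest)
        have hwj : w j = ξ j (κ j) := rfl
        rw [hev, hwj]
        ring
      exact mixedPartial_vanish hVo hwV hPF (ℓ j).isLt
    rw [hsplit, hvan, zero_add]
  refine ⟨hPart1, fun f hf L hL hmem => by rw [hPart2 f hf L hL hmem], ?_⟩
  -- Part (iii)
  obtain ⟨L, hdegL, hne⟩ := hPart1
  set z := interpSum m ξ ν a (fun s => MvPolynomial.eval s L) with hz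
  refine ⟨fun s => MvPolynomial.eval s (MvPolynomial.C (c / z) * L),
    fun x _ => analyticAt_evalP _ x, ?_⟩
  have hscale : interpSum m ξ ν a
      (fun s => MvPolynomial.eval s (MvPolynomial.C (c / z) * L))
        = (c / z) * interpSum m ξ ν a (fun s => MvPolynomial.eval s L) := by
    unfold interpSum
    rw [Finset.mul_sum]
    refine Finset.sum_congr rfl fun κ _ => ?_
    rw [Finset.mul_sum]
    refine Finset.sum_congr rfl fun ℓ _ => ?_
    have h1 := congrFun (mixedPartial_eval (fun j => (ℓ j : ℕ))
      (MvPolynomial.C (c / z) * L)) (fun j => ξ j (κ j))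
    have h2 := congrFun (mixedPartial_eval (fun j => (ℓ j : ℕ)) L) (fun j => ξ j (κ j))
    rw [h1, h2, mpderiv_C_mul, map_mul, MvPolynomial.eval_C]
    ring
  rw [hscale, ← hz, div_mul_cancel₀ c hne]
end
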